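/- Let τ' = bk(τ,γ) with v ∈ V_i as above, μ = Φ(τ), μ' = Φ(τ'). Then deg(μ'_{X_0∪X_i}) ≤ deg(μ_{X_0∪X_i}), and there exists a divisor ν of μ_{X_0∪X_i} with deg ν = deg(μ'_{X_0∪X_i}) and μ'_{X_0∪X_i} ⪰ ν in revlex order. -/

import Mathlib

open Finset

/-- The one-block map `φ` (0-based encoding of an ordered set in listing order; output is the
multiset of 1-based variable indices). -/
def phiMap (τ : Finset ℕ) : Multiset ℕ :=
  ↑((((τ.sort (· ≤ ·)).zipIdx.map Prod.swap).map (fun p => p.2 - p.1)).filter (fun x => x ≠ 0))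

/-- The "non-initial-segment" part `ρ(Y,W)` of the inverse map `ψ(Y,W)`, for an ambient
ordered set `W` whose `a`-subsets are matched with monomials. -/
def rhoMap (a : ℕ) (μ : Multiset ℕ) : Finset ℕ :=
  (((μ.sort (· ≤ ·)).zipIdx.map Prod.swap).map (fun p => p.2 + p.1 + (a - Multiset.card μ))).toFinset

/-- The one-block map `ψ(Y,W) = σ ∪ ρ`. -/
def psiMap (a : ℕ) (μ : Multiset ℕ) : Finset ℕ :=
  Finset.range (a - Multiset.card μ) ∪ rhoMap a μ

/-- `fl(τ,i)`: the revlex-first `k`-subset of `range N` containing `s` (add the earliest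
missing elements). -/
def fillF (s : Finset ℕ) (k N : ℕ) : Finset ℕ :=
  s ∪ ((((Finset.range N) \ s).sort (· ≤ ·)).take (k - s.card)).toFinset

/-- A facet of `Λ_d`, encoded blockwise: `τ i ⊆ V_i = range (n i)` with `|τ i| ≤ a i`
(for `i < m`) and `∑ |τ i| = d`. -/
def IsFacetT (m d : ℕ) (n a : ℕ → ℕ) (τ : ℕ → Finset ℕ) : Prop :=
  (∀ i, i < m → τ i ⊆ Finset.range (n i)) ∧ (∀ i, i < m → (τ i).card ≤ a i) ∧
  (∀ i, m ≤ i → τ i = ∅) ∧ (∑ i ∈ Finset.range m, (τ i).card) = d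

/-- `Φ_i(τ) = φ(V_i, X_i)(fl(τ,i))`. -/
def PhiBlock (a n : ℕ → ℕ) (τ : ℕ → Finset ℕ) (i : ℕ) : Multiset ℕ :=
  phiMap (fillF (τ i) (a i) (n i))

/-- `b i = a i - deg Φ_i(τ)`, the size of the block-`i` part of `V[τ]`. -/
def bfun (a n : ℕ → ℕ) (τ : ℕ → Finset ℕ) (i : ℕ) : ℕ :=
  a i - Multiset.card (PhiBlock a n τ i)

/-- Offsets identifying `V[τ] = ⋃ᵢ (first `b i` elements of `V_i`)` with `range (∑ b)`. -/
def offF (b : ℕ → ℕ) (i : ℕ) : ℕ := ∑ t ∈ Finset.range i, b t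

/-- `τ ∩ V[τ]`, as a subset of `range (∑ b)` via the order isomorphism. -/
def globF (m : ℕ) (b : ℕ → ℕ) (τ : ℕ → Finset ℕ) : Finset ℕ :=
  (Finset.range m).biUnion (fun i => ((τ i) ∩ Finset.range (b i)).image (fun j => offF b i + j))

/-- The full map `Φ`: index `0` gives the `X₀`-part `Φ₀(τ) = φ(V[τ],X₀)(τ ∩ V[τ])`, and index
`i+1 ≤ m` gives the `X_i`-part `Φ_i(τ)`. -/
def PhiMapT (m : ℕ) (a n : ℕ → ℕ) (τ : ℕ → Finset ℕ) : ℕ → Multiset ℕ :=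
  fun i => if i = 0 then phiMap (globF m (bfun a n τ) τ)
    else if i ≤ m then PhiBlock a n τ (i - 1) else 0

/-- Membership in `S_d(X,(∞,a))`, blockwise: `μ 0` is the `X₀`-part (`|X₀| = ∑ a - d`) and
`μ (i+1)` is the `X_i`-part (`|X_i| = n i - a i`, of degree at most `a i`). -/
def InST (m d : ℕ) (n a : ℕ → ℕ) (μ : ℕ → Multiset ℕ) : Prop :=
  (∑ i ∈ Finset.range (m + 1), Multiset.card (μ i)) ≤ d ∧
  (∀ i, i < m → Multiset.card (μ (i + 1)) ≤ a i) ∧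
  (∀ x ∈ μ 0, 1 ≤ x ∧ x ≤ (∑ i ∈ Finset.range m, a i) - d) ∧
  (∀ i, i < m → ∀ x ∈ μ (i + 1), 1 ≤ x ∧ x ≤ n i - a i) ∧
  (∀ i, m + 1 ≤ i → μ i = 0)

/-- The inverse map `Ψ`: `Ψ(μ) ∩ V_i = Ψ_i(μ) ∪ (block-i part of Ψ₀(μ))` where
`Ψ_i(μ) = ρ(X_i,V_i)(μ_{X_i})` and `Ψ₀(μ) = ψ(X₀,V[μ])(μ_{X₀}) ⊆ V[μ] ≅ range (∑ b)`. -/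
def PsiMapT (m d : ℕ) (n a : ℕ → ℕ) (μ : ℕ → Multiset ℕ) : ℕ → Finset ℕ :=
  fun i =>
    if i < m then
      rhoMap (a i) (μ (i + 1)) ∪
        ((psiMap ((∑ t ∈ Finset.range m, (a t - Multiset.card (μ (t + 1)))) -
              ((∑ t ∈ Finset.range m, a t) - d)) (μ 0) ∩
            Finset.Ico (offF (fun t => a t - Multiset.card (μ (t + 1))) i)
              (offF (fun t => a t - Multiset.card (μ (t + 1))) i +
                (a i - Multiset.card (μ (i + 1))))).image
          (fun j => j - offF (fun t => a t - Multiset.card (μ (t + 1))) i))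
    else ∅

/-- The block-`i` part of `up(τ)`. -/
def upT (a n : ℕ → ℕ) (τ : ℕ → Finset ℕ) (i : ℕ) : Finset ℕ :=
  if (τ i).card = a i then
    (τ i).filter (fun j => ∃ g ∈ Finset.range (n i) \ τ i, g < j) else ∅

/-- The block-`i` part of `tail(τ)`. -/
def tailT (m : ℕ) (a n : ℕ → ℕ) (τ : ℕ → Finset ℕ) (i : ℕ) : Finset ℕ :=
  (τ i).filter (fun j => ∃ i₀, i₀ < m ∧ (τ i₀).card < a i₀ ∧
    (∀ t, t < i₀ → (τ t).card = a t) ∧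
    (i₀ < i ∨ (i₀ = i ∧ ∃ g, g < j ∧ g ∉ τ i ∧ g < n i)))

/-- Revlex order on the monomials on `X₀ ∪ X_i`, given by the pair (X₀-part, X_i-part):
the variables of `X₀` are listed before (are `≻`-larger than) those of `X_i`, and within a
block a smaller index means an `≻`-larger variable.  `p ≻ q` iff at the `≻`-least variable
where they differ, `p` has the smaller exponent. -/
def MonRevGT2 (p0 p1 q0 q1 : Multiset ℕ) : Prop :=
  (∃ x, p1.count x < q1.count x ∧ ∀ y, x < y → p1.count y = q1.count y) ∨
  (p1 = q1 ∧ ∃ x, p0.count x < q0.count x ∧ ∀ y, x < y → p0.count y = q0.count y)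


/-- tail count: number of elements ≥ x -/
def tailc (p : Multiset ℕ) (x : ℕ) : ℕ := Multiset.card (p.filter (x ≤ ·))

lemma tailc_zero (p : Multiset ℕ) : tailc p 0 = Multiset.card p := by
  unfold tailc
  rw [Multiset.filter_eq_self.2 (fun a _ => Nat.zero_le a)]

lemma tailc_le_card (p : Multiset ℕ) (x : ℕ) : tailc p x ≤ Multiset.card p :=
  Multiset.card_le_card (Multiset.filter_le _ _)

lemma tailc_anti (p : Multiset ℕ) {x y : ℕ} (h : x ≤ y) : tailc p y ≤ tailc p x := by
  apply Multiset.card_le_card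
  apply Multiset.monotone_filter_right
  intro a ha
  omega

lemma tailc_succ (p : Multiset ℕ) (x : ℕ) :
    tailc p x = p.count x + tailc p (x + 1) := by
  induction p using Multiset.induction with
  | empty => simp [tailc]
  | cons a s ih =>
    rw [Multiset.count_cons, tailc, tailc, Multiset.filter_cons, Multiset.filter_cons,
      Multiset.card_add, Multiset.card_add]
    rw [tailc, tailc] at ih
    by_cases h2 : x + 1 ≤ a
    · have h1 : x ≤ a := by omega
      have h3 : ¬(x = a) := by omega
      rw [if_pos h1, if_pos h2, if_neg h3]
      simp only [Multiset.card_singleton, Multiset.card_zero]; omega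
    · by_cases h1 : x ≤ a
      · have h3 : x = a := by omega
        rw [if_pos h1, if_neg h2, if_pos h3]
        simp only [Multiset.card_singleton, Multiset.card_zero]; omega
      · have h3 : ¬(x = a) := by omega
        rw [if_neg h1, if_neg h2, if_neg h3]
        simp only [Multiset.card_singleton, Multiset.card_zero]; omega

lemma tailc_congr_above (p q : Multiset ℕ) (x : ℕ)
    (h : ∀ y, x ≤ y → p.count y = q.count y) : tailc p x = tailc q x := by
  unfold tailc
  congr 1
  ext a
  rw [Multiset.count_filter, Multiset.count_filter]
  split
  · exact h a (by assumption)
  · rfl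

/-- revlex comparison (strict): p ≻ q -/
def revGT (p q : Multiset ℕ) : Prop :=
  ∃ x, p.count x < q.count x ∧ ∀ y, x < y → p.count y = q.count y

/-- Lemma R: tail domination implies equal or revlex-greater. -/
lemma revlex_of_tailc_le (p q : Multiset ℕ) (h : ∀ x, tailc p x ≤ tailc q x) :
    p = q ∨ revGT p q := by
  by_cases hpq : p = q
  · exact Or.inl hpq
  right
  have hne : ∃ x ∈ p.toFinset ∪ q.toFinset, p.count x ≠ q.count x := by
    by_contra hc
    push_neg at hc
    apply hpq
    ext a
    by_cases ha : a ∈ p.toFinset ∪ q.toFinset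
    · exact hc a ha
    · simp only [Finset.mem_union, Multiset.mem_toFinset] at ha
      push_neg at ha
      rw [Multiset.count_eq_zero_of_notMem ha.1, Multiset.count_eq_zero_of_notMem ha.2]
  set s : Finset ℕ := (p.toFinset ∪ q.toFinset).filter (fun x => p.count x ≠ q.count x) with hs
  have hsne : s.Nonempty := by
    obtain ⟨x, hx1, hx2⟩ := hne
    exact ⟨x, Finset.mem_filter.2 ⟨hx1, hx2⟩⟩
  set x := s.max' hsne with hx
  have hxs : x ∈ s := s.max'_mem hsne
  have habove : ∀ y, x < y → p.count y = q.count y := by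
    intro y hy
    by_contra hc
    have hymem : y ∈ s := by
      refine Finset.mem_filter.2 ⟨?_, hc⟩
      simp only [Finset.mem_union, Multiset.mem_toFinset]
      by_contra hn
      push_neg at hn
      rw [Multiset.count_eq_zero_of_notMem hn.1, Multiset.count_eq_zero_of_notMem hn.2] at hc
      exact hc rfl
    exact absurd (s.le_max' y hymem) (by omega)
  refine ⟨x, ?_, habove⟩
  have ht : tailc p (x + 1) = tailc q (x + 1) :=
    tailc_congr_above _ _ _ (fun y hy => habove y (by omega))
  have h1 := h x
  rw [tailc_succ p x, tailc_succ q x, ht] at h1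
  have := (Finset.mem_filter.1 hxs).2
  omega

/-- existence of the top-k divisor ν -/
lemma exists_nu (μ : Multiset ℕ) (k : ℕ) (hk : k ≤ Multiset.card μ) :
    ∃ ν, ν ≤ μ ∧ Multiset.card ν = k ∧ ∀ x, tailc ν x = min k (tailc μ x) := by
  rcases Nat.eq_zero_or_pos k with hk0 | hk0
  · exact ⟨0, Multiset.zero_le μ, by simp [hk0], fun x => by simp [tailc, hk0]⟩
  have hex : ∃ x, tailc μ (x + 1) < k := by
    refine ⟨μ.sum, ?_⟩
    have : Multiset.filter (fun e => μ.sum + 1 ≤ e) μ = 0 := by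
      rw [Multiset.filter_eq_nil]
      intro a ha
      have := Multiset.single_le_sum (fun x _ => Nat.zero_le x) a ha
      omega
    show Multiset.card (Multiset.filter (fun e => μ.sum + 1 ≤ e) μ) < k
    rw [this]
    simpa using hk0
  set c := Nat.find hex with hc
  have hcP : tailc μ (c + 1) < k := Nat.find_spec hex
  have hcge : k ≤ tailc μ c := by
    rcases Nat.eq_zero_or_pos c with h0 | h0
    · rw [h0, tailc_zero]; exact hk
    · have := Nat.find_min hex (m := c - 1) (by omega)
      have hc1 : c - 1 + 1 = c := by omega
      rw [hc1] at this
      omega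
  have hcount : μ.count c = tailc μ c - tailc μ (c + 1) := by
    have := tailc_succ μ c; omega
  set ν := Multiset.filter (fun e => c + 1 ≤ e) μ + Multiset.replicate (k - tailc μ (c + 1)) c with hν
  have hνcount : ∀ y, ν.count y =
      (if c + 1 ≤ y then μ.count y else 0) + (if y = c then k - tailc μ (c + 1) else 0) := by
    intro y
    rw [hν, Multiset.count_add, Multiset.count_filter, Multiset.count_replicate]
    rw [eq_comm]
    congr 1
    · exact if_congr (by omega) rfl rfl
  refine ⟨ν, ?_, ?_, ?_⟩
  · apply Multiset.le_iff_count.2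
    intro y
    rw [hνcount y]
    by_cases h1 : c + 1 ≤ y
    · have : ¬ (y = c) := by omega
      simp [h1, this]
    · by_cases h2 : y = c
      · simp [h1, h2]; omega
      · simp [h1, h2]
  · rw [hν, Multiset.card_add, Multiset.card_replicate]
    change tailc μ (c+1) + _ = k
    omega
  · intro x
    have htν : tailc ν x = Multiset.card (Multiset.filter (fun e => x ≤ e) ν) := rfl
    by_cases hxc : x ≤ c
    · -- tailc ν x = k ; tailc μ x ≥ k
      have h1 : tailc μ x ≥ k := le_trans hcge (tailc_anti μ hxc)
      have h2 : tailc ν x = k := by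
        have hall : Multiset.filter (fun e => x ≤ e) ν = ν := by
          rw [Multiset.filter_eq_self]
          intro a ha
          rw [hν] at ha
          rcases Multiset.mem_add.1 ha with h | h
          · have := (Multiset.mem_filter.1 h).2; omega
          · have := Multiset.eq_of_mem_replicate h; omega
        rw [tailc, hall, hν, Multiset.card_add, Multiset.card_replicate]
        change tailc μ (c+1) + _ = k
        omega
      omega
    · -- x > c: tailc ν x = tailc μ x ≤ tailc μ (c+1) < k
      push_neg at hxc
      have h1 : tailc μ x ≤ tailc μ (c + 1) := tailc_anti μ (by omega)
      have h2 : tailc ν x = tailc μ x := by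
        apply tailc_congr_above
        intro y hy
        rw [hνcount y]
        have hy1 : c + 1 ≤ y := by omega
        have hy2 : ¬ (y = c) := by omega
        simp [hy1, hy2]
      omega

/-- number of "gaps" of F strictly below v -/
def gapc (F : Finset ℕ) (v : ℕ) : ℕ := ((range v) \ F).card

/-- number of elements of F with gap count ≥ x -/
def tgap (F : Finset ℕ) (x : ℕ) : ℕ := (F.filter (fun v => x ≤ gapc F v)).card

/-- length of the initial segment of F -/
def initF (F : Finset ℕ) : ℕ := (F.filter (fun v => range v ⊆ F)).card

lemma lower_eq_range (s : Finset ℕ) (h : ∀ v ∈ s, range v ⊆ s) : s = range s.card := by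
  rcases s.eq_empty_or_nonempty with he | hne
  · simp [he]
  have key : s = range (s.max' hne + 1) := by
    ext j
    simp only [mem_range]
    constructor
    · intro hj; exact Nat.lt_succ_of_le (s.le_max' j hj)
    · intro hj
      rcases Nat.lt_or_ge j (s.max' hne) with h1 | h1
      · exact h _ (s.max'_mem hne) (mem_range.2 h1)
      · have : j = s.max' hne := by omega
        rw [this]; exact s.max'_mem hne
  rw [key, card_range]

lemma initF_spec (F : Finset ℕ) : F.filter (fun v => range v ⊆ F) = range (initF F) := by
  apply lower_eq_range
  intro v hv w hw
  obtain ⟨hv1, hv2⟩ := mem_filter.1 hv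
  refine mem_filter.2 ⟨hv2 hw, fun z hz => hv2 ?_⟩
  simp only [mem_range] at *
  omega

lemma initF_sub (F : Finset ℕ) : range (initF F) ⊆ F := by
  rw [← initF_spec]
  exact filter_subset _ _

lemma initF_not_mem (F : Finset ℕ) : initF F ∉ F := by
  intro h
  have h2 : initF F ∈ F.filter (fun v => range v ⊆ F) := mem_filter.2 ⟨h, initF_sub F⟩
  rw [initF_spec] at h2
  simp at h2

lemma le_initF_of_sub (F : Finset ℕ) (t : ℕ) (h : range t ⊆ F) : t ≤ initF F := by
  by_contra hc
  exact initF_not_mem F (h (mem_range.2 (by omega)))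

lemma gapc_eq_zero_iff (F : Finset ℕ) (v : ℕ) : gapc F v = 0 ↔ range v ⊆ F := by
  rw [gapc, card_eq_zero, sdiff_eq_empty_iff_subset]

lemma gapc_mono (F : Finset ℕ) {v w : ℕ} (h : v ≤ w) : gapc F v ≤ gapc F w := by
  apply card_le_card
  apply sdiff_subset_sdiff _ le_rfl
  intro z hz
  simp only [mem_range] at *
  omega

-- core sorted-list lemma
lemma filter_lt_getElem (l : List ℕ) (hl : l.Pairwise (· < ·)) (i : ℕ) (hi : i < l.length) :
    (l.filter (fun x => x < l[i])).length = i := by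
  have hsm : ∀ j k (hj : j < l.length) (hk : k < l.length), j < k → l[j] < l[k] :=
    fun j k hj hk hjk => List.pairwise_iff_get.1 hl ⟨j, hj⟩ ⟨k, hk⟩ hjk
  obtain ⟨v, hv⟩ : ∃ v, l[i] = v := ⟨l[i], rfl⟩
  rw [hv]
  have hsplit : (l.filter (fun x => x < v)).length =
      ((l.take i).filter (fun x => x < v)).length + ((l.drop i).filter (fun x => x < v)).length := by
    conv_lhs => rw [← List.take_append_drop i l]
    rw [List.filter_append, List.length_append]
  rw [hsplit]
  have h1 : (l.take i).filter (fun x => x < v) = l.take i := by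
    rw [List.filter_eq_self]
    intro a ha
    obtain ⟨j, hj, rfl⟩ := List.mem_take_iff_getElem.1 ha
    have hj' : j < i := by omega
    have := hsm j i (by omega) hi hj'
    rw [hv] at this
    simpa using this
  have h2 : (l.drop i).filter (fun x => x < v) = [] := by
    rw [List.filter_eq_nil_iff]
    intro a ha
    obtain ⟨j, hj, rfl⟩ := List.mem_drop_iff_getElem.1 ha
    have : v ≤ l[i + j] := by
      rw [← hv]
      rcases Nat.eq_zero_or_pos j with h0 | h0
      · simp [h0]
      · exact le_of_lt (hsm i (i+j) hi (by omega) (by omega))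
    simp only [decide_eq_true_eq]
    omega
  rw [h1, h2, List.length_take]
  simp
  omega

lemma card_filter_finset_eq_length (F : Finset ℕ) (p : ℕ → Prop) [DecidablePred p] :
    (F.filter p).card = ((F.sort (· ≤ ·)).filter (fun x => decide (p x))).length := by
  rw [← List.countP_eq_length_filter]
  have : (F.filter p).card = Multiset.countP p F.val := by
    rw [Finset.card_def, Finset.filter_val, Multiset.countP_eq_card_filter]
  rw [this, ← Finset.sort_eq F (· ≤ ·)]
  rfl

lemma sort_getElem_mem (F : Finset ℕ) (i : ℕ) (hi : i < (F.sort (· ≤ ·)).length) :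
    (F.sort (· ≤ ·))[i] ∈ F := by
  have : (F.sort (· ≤ ·))[i] ∈ F.sort (· ≤ ·) := List.getElem_mem _
  rwa [Finset.mem_sort] at this

lemma gapc_sort_getElem (F : Finset ℕ) (i : ℕ) (hi : i < (F.sort (· ≤ ·)).length) :
    i ≤ (F.sort (· ≤ ·))[i] ∧ gapc F ((F.sort (· ≤ ·))[i]) = (F.sort (· ≤ ·))[i] - i := by
  set l := F.sort (· ≤ ·) with hldef
  set v := l[i] with hv
  have hcount : (F.filter (fun x => x < v)).card = i := by
    rw [card_filter_finset_eq_length]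
    exact filter_lt_getElem l ((Finset.sortedLT_sort F).pairwise) i hi
  have hsub : F.filter (fun x => x < v) ⊆ range v := by
    intro x hx
    simp only [mem_filter] at hx
    exact mem_range.2 hx.2
  have hsd : range v \ F = range v \ (F.filter (fun x => x < v)) := by
    ext x
    simp only [mem_sdiff, mem_range, mem_filter]
    tauto
  have hgap : gapc F v = v - i := by
    rw [gapc, hsd, card_sdiff_of_subset hsub, card_range, hcount]
  have hle : i ≤ v := by
    have := card_le_card hsub
    rw [hcount, card_range] at this
    exact this
  exact ⟨hle, hgap⟩

/-- main characterization of phiMap via gap counts -/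
lemma phiMap_eq (F : Finset ℕ) :
    phiMap F = Multiset.filter (fun x => x ≠ 0) (F.val.map (fun v => gapc F v)) := by
  set l := F.sort (· ≤ ·) with hldef
  have key : (l.zipIdx.map Prod.swap).map (fun p => p.2 - p.1) = l.map (fun v => gapc F v) := by
    apply List.ext_getElem
    · simp
    · intro i h1 h2
      simp only [List.getElem_map, List.getElem_zipIdx, Prod.swap, zero_add]
      have hi : i < l.length := by simpa using h2
      obtain ⟨h3, h4⟩ := gapc_sort_getElem F i hi
      rw [h4]
  rw [phiMap, key, ← Finset.sort_eq F (· ≤ ·)]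
  rw [Multiset.map_coe, Multiset.filter_coe]

-- depends on s1 (tailc) and s2
lemma tailc_phiMap (F : Finset ℕ) (x : ℕ) (hx : 1 ≤ x) : tailc (phiMap F) x = tgap F x := by
  rw [phiMap_eq, tailc, Multiset.filter_filter]
  have hcongr : Multiset.filter (fun a => x ≤ a ∧ a ≠ 0) (F.val.map (fun v => gapc F v))
      = Multiset.filter (fun a => x ≤ a) (F.val.map (fun v => gapc F v)) := by
    apply Multiset.filter_congr
    intro a _
    constructor
    · exact fun h => h.1
    · exact fun h => ⟨h, by omega⟩
  rw [hcongr, ← Multiset.countP_eq_card_filter, Multiset.countP_map, tgap,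
    Finset.card_def, Finset.filter_val]

lemma card_phiMap_tgap (F : Finset ℕ) : Multiset.card (phiMap F) = tgap F 1 := by
  have h0 : ∀ a ∈ phiMap F, (1:ℕ) ≤ a := by
    intro a ha
    rw [phiMap_eq, Multiset.mem_filter] at ha
    omega
  have : Multiset.filter (fun a => (1:ℕ) ≤ a) (phiMap F) = phiMap F :=
    Multiset.filter_eq_self.2 h0
  rw [← tailc_phiMap F 1 le_rfl, tailc, this]

lemma card_phiMap_add_initF (F : Finset ℕ) :
    Multiset.card (phiMap F) + initF F = F.card := by
  rw [card_phiMap_tgap, tgap]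
  have h1 : initF F = (F.filter (fun v => ¬ (1 ≤ gapc F v))).card := by
    rw [initF]
    congr 1
    apply Finset.filter_congr
    intro v _
    rw [← gapc_eq_zero_iff]
    omega
  rw [h1, Finset.card_filter_add_card_filter_not]

lemma gapc_swap_le (F : Finset ℕ) (xx w : ℕ) (hxF : xx ∈ F) (hwF : w ∉ F) (hwx : w < xx)
    (v : ℕ) : gapc (insert w (F.erase xx)) v ≤ gapc F v := by
  classical
  set F' := insert w (F.erase xx) with hF'
  apply Finset.card_le_card_of_injOn (fun z => if z = xx then w else z)
  · intro z hz
    simp only [Finset.coe_sdiff, Set.mem_diff, Finset.mem_coe, Finset.mem_sdiff, Finset.mem_range] at hz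
    obtain ⟨hz1, hz2⟩ := hz
    have hzw : z ≠ w := by
      intro h; apply hz2; rw [hF', h]; exact Finset.mem_insert_self _ _
    by_cases hzx : z = xx
    · simp only [if_pos hzx, Finset.coe_sdiff, Set.mem_diff, Finset.mem_coe]
      simp only [Finset.mem_sdiff, Finset.mem_range]
      exact ⟨by omega, hwF⟩
    · simp only [if_neg hzx, Finset.coe_sdiff, Set.mem_diff, Finset.mem_coe]
      simp only [Finset.mem_sdiff, Finset.mem_range]
      refine ⟨hz1, fun hzF => hz2 ?_⟩
      rw [hF']
      exact Finset.mem_insert.2 (Or.inr (Finset.mem_erase.2 ⟨hzx, hzF⟩))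
  · intro z1 h1 z2 h2 he
    simp only [Finset.mem_coe, Finset.mem_sdiff, Finset.mem_range] at h1 h2
    simp only at he
    have hw1 : z1 ≠ w := fun h => h1.2 (by rw [hF', h]; exact Finset.mem_insert_self _ _)
    have hw2 : z2 ≠ w := fun h => h2.2 (by rw [hF', h]; exact Finset.mem_insert_self _ _)
    by_cases e1 : z1 = xx <;> by_cases e2 : z2 = xx
    · rw [e1, e2]
    · rw [if_pos e1, if_neg e2] at he; omega
    · rw [if_neg e1, if_pos e2] at he; omega
    · rwa [if_neg e1, if_neg e2] at he

lemma gapc_swap_w (F : Finset ℕ) (xx w : ℕ) (hwx : w < xx) :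
    gapc (insert w (F.erase xx)) w = gapc F w := by
  rw [gapc, gapc]
  congr 1
  ext z
  simp only [Finset.mem_sdiff, Finset.mem_range, Finset.mem_insert, Finset.mem_erase]
  constructor
  · intro ⟨h1, h2⟩
    refine ⟨h1, fun hz => h2 (Or.inr ⟨by omega, hz⟩)⟩
  · intro ⟨h1, h2⟩
    refine ⟨h1, fun hz => ?_⟩
    rcases hz with hz | hz
    · omega
    · exact h2 hz.2

lemma tgap_swap (F : Finset ℕ) (xx w : ℕ) (hxF : xx ∈ F) (hwF : w ∉ F) (hwx : w < xx)
    (y : ℕ) : tgap (insert w (F.erase xx)) y ≤ tgap F y := by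
  classical
  set F' := insert w (F.erase xx) with hF'
  apply Finset.card_le_card_of_injOn (fun v => if v = w then xx else v)
  · intro v hv
    simp only [Finset.mem_coe, Finset.mem_filter] at hv ⊢
    obtain ⟨hv1, hv2⟩ := hv
    by_cases hvw : v = w
    · rw [if_pos hvw]
      refine ⟨hxF, ?_⟩
      calc y ≤ gapc F' w := hvw ▸ hv2
        _ = gapc F w := gapc_swap_w F xx w hwx
        _ ≤ gapc F xx := gapc_mono F (by omega)
    · rw [if_neg hvw]
      rw [hF', Finset.mem_insert] at hv1
      rcases hv1 with h | h
      · exact absurd h hvw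
      · exact ⟨(Finset.mem_erase.1 h).2, le_trans hv2 (gapc_swap_le F xx w hxF hwF hwx v)⟩
  · intro v1 h1 v2 h2 he
    simp only [Finset.mem_coe, Finset.mem_filter] at h1 h2
    simp only at he
    have hm1 := h1.1
    have hm2 := h2.1
    rw [hF', Finset.mem_insert] at hm1 hm2
    by_cases e1 : v1 = w <;> by_cases e2 : v2 = w
    · rw [e1, e2]
    · rw [if_pos e1, if_neg e2] at he
      rcases hm2 with h | h
      · exact absurd h e2
      · exact absurd he.symm (Finset.mem_erase.1 h).1
    · rw [if_neg e1, if_pos e2] at he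
      rcases hm1 with h | h
      · exact absurd h e1
      · exact absurd he (Finset.mem_erase.1 h).1
    · rwa [if_neg e1, if_neg e2] at he

lemma gapc_insert_le (F : Finset ℕ) (w v : ℕ) : gapc (insert w F) v ≤ gapc F v := by
  apply Finset.card_le_card
  apply Finset.sdiff_subset_sdiff le_rfl
  exact Finset.subset_insert _ _

lemma tgap_insert0 (F : Finset ℕ) (w : ℕ) (hw : Finset.range w ⊆ F)
    (y : ℕ) (hy : 1 ≤ y) : tgap (insert w F) y ≤ tgap F y := by
  classical
  apply Finset.card_le_card_of_injOn (fun v => v)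
  · intro v hv
    simp only [Finset.mem_coe, Finset.mem_filter, Finset.mem_insert] at hv ⊢
    obtain ⟨hv1, hv2⟩ := hv
    have hvw : v ≠ w := by
      intro h
      have : gapc (insert w F) w = 0 := by
        rw [gapc_eq_zero_iff]
        exact le_trans hw (Finset.subset_insert _ _)
      rw [h, this] at hv2
      omega
    rcases hv1 with h | h
    · exact absurd h hvw
    · exact ⟨h, le_trans hv2 (gapc_insert_le F w v)⟩
  · intro a _ b _ h
    exact h

-- Section 4: fillF

lemma mem_take_sort (D : Finset ℕ) (t x : ℕ) :
    x ∈ (D.sort (· ≤ ·)).take t ↔ x ∈ D ∧ (D.filter (· < x)).card < t := by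
  set l := D.sort (· ≤ ·) with hl
  constructor
  · intro hx
    obtain ⟨j, hj, rfl⟩ := List.mem_take_iff_getElem.1 hx
    have hjl : j < l.length := by omega
    refine ⟨sort_getElem_mem D j hjl, ?_⟩
    rw [card_filter_finset_eq_length]
    have := filter_lt_getElem l ((Finset.sortedLT_sort D).pairwise) j hjl
    rw [this]
    omega
  · intro ⟨hx1, hx2⟩
    have hxl : x ∈ l := (Finset.mem_sort (· ≤ ·)).2 hx1
    obtain ⟨j, hj, rfl⟩ := List.mem_iff_getElem.1 hxl
    rw [card_filter_finset_eq_length] at hx2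
    have := filter_lt_getElem l ((Finset.sortedLT_sort D).pairwise) j hj
    rw [this] at hx2
    exact List.mem_take_iff_getElem.2 ⟨j, by omega, rfl⟩

lemma fillF_eq (s : Finset ℕ) (k N : ℕ) :
    fillF s k N = s ∪ (Finset.range N).filter
      (fun g => g ∉ s ∧ gapc s g < k - s.card) := by
  ext x
  rw [fillF, Finset.mem_union, Finset.mem_union, List.mem_toFinset, mem_take_sort]
  constructor
  · rintro (h | ⟨h1, h2⟩)
    · exact Or.inl h
    · right
      rw [Finset.mem_sdiff, Finset.mem_range] at h1
      refine Finset.mem_filter.2 ⟨Finset.mem_range.2 h1.1, h1.2, ?_⟩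
      have : (Finset.range N \ s).filter (· < x) = Finset.range x \ s := by
        ext z
        simp only [Finset.mem_filter, Finset.mem_sdiff, Finset.mem_range]
        constructor
        · intro ⟨⟨z1, z2⟩, z3⟩; exact ⟨z3, z2⟩
        · intro ⟨z1, z2⟩; exact ⟨⟨by omega, z2⟩, z1⟩
      rwa [this] at h2
  · rintro (h | h)
    · exact Or.inl h
    · right
      obtain ⟨hx1, hx2, hx3⟩ := Finset.mem_filter.1 h
      rw [Finset.mem_range] at hx1
      refine ⟨Finset.mem_sdiff.2 ⟨Finset.mem_range.2 hx1, hx2⟩, ?_⟩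
      have : (Finset.range N \ s).filter (· < x) = Finset.range x \ s := by
        ext z
        simp only [Finset.mem_filter, Finset.mem_sdiff, Finset.mem_range]
        constructor
        · intro ⟨⟨z1, z2⟩, z3⟩; exact ⟨z3, z2⟩
        · intro ⟨z1, z2⟩; exact ⟨⟨by omega, z2⟩, z1⟩
      rw [this]
      exact hx3

lemma subset_fillF (s : Finset ℕ) (k N : ℕ) : s ⊆ fillF s k N :=
  Finset.subset_union_left

lemma fillF_subset_range (s : Finset ℕ) (k N : ℕ) (hs : s ⊆ Finset.range N) :
    fillF s k N ⊆ Finset.range N := by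
  rw [fillF_eq]
  intro x hx
  rcases Finset.mem_union.1 hx with h | h
  · exact hs h
  · exact (Finset.mem_filter.1 h).1

lemma mem_fillF_iff (s : Finset ℕ) (k N g : ℕ) (hg : g < N) (hgs : g ∉ s) :
    g ∈ fillF s k N ↔ gapc s g < k - s.card := by
  rw [fillF_eq, Finset.mem_union, Finset.mem_filter]
  constructor
  · rintro (h | h)
    · exact absurd h hgs
    · exact h.2.2
  · intro h
    exact Or.inr ⟨Finset.mem_range.2 hg, hgs, h⟩

lemma card_fillF (s : Finset ℕ) (k N : ℕ) (hs : s ⊆ Finset.range N)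
    (h1 : s.card ≤ k) (h2 : k ≤ N) : (fillF s k N).card = k := by
  rw [fillF]
  have hdisj : Disjoint s ((((Finset.range N) \ s).sort (· ≤ ·)).take (k - s.card)).toFinset := by
    rw [Finset.disjoint_right]
    intro x hx
    rw [List.mem_toFinset] at hx
    have := List.mem_of_mem_take hx
    rw [Finset.mem_sort] at this
    exact fun hxs => (Finset.mem_sdiff.1 this).2 hxs
  rw [Finset.card_union_of_disjoint hdisj]
  have hnd : ((((Finset.range N) \ s).sort (· ≤ ·)).take (k - s.card)).Nodup :=
    ((Finset.sort_nodup _ _).sublist (List.take_sublist _ _))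
  rw [List.toFinset_card_of_nodup hnd, List.length_take, Finset.length_sort]
  have hc : (Finset.range N \ s).card = N - s.card := by
    rw [Finset.card_sdiff_of_subset hs, Finset.card_range]
  rw [hc]
  omega

lemma fillF_card_eq (s : Finset ℕ) (k N : ℕ) (h : s.card = k) : fillF s k N = s := by
  rw [fillF, h, Nat.sub_self, List.take_zero]
  simp

lemma gapc_erase_eq (s : Finset ℕ) (jv g : ℕ) (h : jv ∈ s) :
    gapc (s.erase jv) g = gapc s g + if jv < g then 1 else 0 := by
  unfold gapc
  by_cases hj : jv < g
  · rw [if_pos hj]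
    have : Finset.range g \ s.erase jv = insert jv (Finset.range g \ s) := by
      ext z
      simp only [Finset.mem_sdiff, Finset.mem_range, Finset.mem_insert, Finset.mem_erase]
      constructor
      · intro ⟨h1, h2⟩
        by_cases hz : z = jv
        · exact Or.inl hz
        · exact Or.inr ⟨h1, fun hzs => h2 ⟨hz, hzs⟩⟩
      · rintro (rfl | ⟨h1, h2⟩)
        · exact ⟨hj, fun hc => hc.1 rfl⟩
        · exact ⟨h1, fun hc => h2 hc.2⟩
    rw [this, Finset.card_insert_of_notMem (by simp [h])]
  · rw [if_neg hj]
    have : Finset.range g \ s.erase jv = Finset.range g \ s := by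
      ext z
      simp only [Finset.mem_sdiff, Finset.mem_range, Finset.mem_erase]
      constructor
      · intro ⟨h1, h2⟩
        exact ⟨h1, fun hzs => h2 ⟨by omega, hzs⟩⟩
      · intro ⟨h1, h2⟩
        exact ⟨h1, fun hc => h2 hc.2⟩
    rw [this]
    omega

lemma gapc_insert_eq (s : Finset ℕ) (j g : ℕ) (h : j ∉ s) :
    gapc s g = gapc (insert j s) g + if j < g then 1 else 0 := by
  unfold gapc
  by_cases hj : j < g
  · rw [if_pos hj]
    have : Finset.range g \ s = insert j (Finset.range g \ insert j s) := by
      ext z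
      simp only [Finset.mem_sdiff, Finset.mem_range, Finset.mem_insert]
      constructor
      · intro ⟨h1, h2⟩
        by_cases hz : z = j
        · exact Or.inl hz
        · exact Or.inr ⟨h1, fun hc => (by rcases hc with hc | hc; exact hz hc; exact h2 hc)⟩
      · rintro (rfl | ⟨h1, h2⟩)
        · exact ⟨hj, h⟩
        · exact ⟨h1, fun hzs => h2 (Or.inr hzs)⟩
    rw [this, Finset.card_insert_of_notMem (by simp)]
  · rw [if_neg hj]
    have : Finset.range g \ insert j s = Finset.range g \ s := by
      ext z
      simp only [Finset.mem_sdiff, Finset.mem_range, Finset.mem_insert]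
      constructor
      · intro ⟨h1, h2⟩
        exact ⟨h1, fun hzs => h2 (Or.inr hzs)⟩
      · intro ⟨h1, h2⟩
        refine ⟨h1, fun hc => ?_⟩
        rcases hc with rfl | hc
        · omega
        · exact h2 hc
    rw [this]
    omega

/-- decomposition: gaps of `s` below `v` split into fill-gaps (in `F \ s`) and gaps of `F`. -/
lemma gapc_fill_decomp (s : Finset ℕ) (k N v : ℕ) (hs : s ⊆ Finset.range N)
    (h1 : s.card ≤ k) (h2 : k ≤ N) (hv : v ≤ N) :
    gapc s v = (Finset.range v ∩ (fillF s k N \ s)).card + gapc (fillF s k N) v := by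
  unfold gapc
  rw [← Finset.card_union_of_disjoint]
  · congr 1
    ext z
    simp only [Finset.mem_union, Finset.mem_inter, Finset.mem_sdiff, Finset.mem_range]
    constructor
    · intro ⟨hz1, hz2⟩
      by_cases hzF : z ∈ fillF s k N
      · exact Or.inl ⟨hz1, hzF, hz2⟩
      · exact Or.inr ⟨hz1, hzF⟩
    · rintro (⟨hz1, _, hz2⟩ | ⟨hz1, hz2⟩)
      · exact ⟨hz1, hz2⟩
      · exact ⟨hz1, fun hzs => hz2 (subset_fillF s k N hzs)⟩
  · rw [Finset.disjoint_right]
    intro z hz1 hz2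
    exact (Finset.mem_sdiff.1 hz1).2 (Finset.mem_sdiff.1 (Finset.mem_inter.1 hz2).2).1

lemma card_fill_sdiff (s : Finset ℕ) (k N : ℕ) (hs : s ⊆ Finset.range N)
    (h1 : s.card ≤ k) (h2 : k ≤ N) : (fillF s k N \ s).card = k - s.card := by
  rw [Finset.card_sdiff_of_subset (subset_fillF s k N), card_fillF s k N hs h1 h2]

lemma gapc_le_fill (s : Finset ℕ) (k N v : ℕ) (hs : s ⊆ Finset.range N)
    (h1 : s.card ≤ k) (h2 : k ≤ N) (hv : v ≤ N) :
    gapc s v ≤ (k - s.card) + gapc (fillF s k N) v := by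
  rw [gapc_fill_decomp s k N v hs h1 h2 hv]
  have : (Finset.range v ∩ (fillF s k N \ s)).card ≤ k - s.card := by
    rw [← card_fill_sdiff s k N hs h1 h2]
    exact Finset.card_le_card Finset.inter_subset_right
  omega

-- Section 5: fill manipulation

lemma fillF_insert_least (s : Finset ℕ) (k N j₀ : ℕ) (hs : s ⊆ Finset.range N)
    (hsk : s.card < k) (hkN : k ≤ N) (hj0N : j₀ < N) (hj0s : j₀ ∉ s)
    (hj0least : Finset.range j₀ ⊆ s) :
    fillF (insert j₀ s) k N = fillF s k N := by
  have hins_sub : insert j₀ s ⊆ Finset.range N := by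
    intro z hz
    rcases Finset.mem_insert.1 hz with rfl | hz
    · exact Finset.mem_range.2 hj0N
    · exact hs hz
  have hcard : (insert j₀ s).card = s.card + 1 := Finset.card_insert_of_notMem hj0s
  have hgap0 : gapc s j₀ = 0 := (gapc_eq_zero_iff s j₀).2 hj0least
  have hj0F : j₀ ∈ fillF s k N := by
    rw [mem_fillF_iff s k N j₀ hj0N hj0s, hgap0]
    omega
  ext x
  constructor
  · intro hx
    by_cases hxi : x ∈ insert j₀ s
    · rcases Finset.mem_insert.1 hxi with rfl | hxs
      · exact hj0F
      · exact subset_fillF s k N hxs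
    · have hxN : x < N := Finset.mem_range.1 (fillF_subset_range _ k N hins_sub hx)
      have hxs : x ∉ s := fun h => hxi (Finset.mem_insert_of_mem h)
      have hxj : x ≠ j₀ := fun h => hxi (h ▸ Finset.mem_insert_self _ _)
      rw [mem_fillF_iff _ k N x hxN hxi, hcard] at hx
      have hlt : j₀ < x := by
        rcases Nat.lt_trichotomy x j₀ with h | h | h
        · exact absurd (hj0least (Finset.mem_range.2 h)) hxs
        · exact absurd h hxj
        · exact h
      have heq := gapc_insert_eq s j₀ x hj0s
      rw [if_pos hlt] at heq
      rw [mem_fillF_iff s k N x hxN hxs]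
      omega
  · intro hx
    by_cases hxs : x ∈ s
    · exact subset_fillF _ k N (Finset.mem_insert_of_mem hxs)
    · by_cases hxj : x = j₀
      · exact subset_fillF _ k N (hxj ▸ Finset.mem_insert_self _ _)
      · have hxN : x < N := Finset.mem_range.1 (fillF_subset_range s k N hs hx)
        have hxi : x ∉ insert j₀ s := by
          intro h
          rcases Finset.mem_insert.1 h with h | h
          · exact hxj h
          · exact hxs h
        rw [mem_fillF_iff s k N x hxN hxs] at hx
        have hlt : j₀ < x := by
          rcases Nat.lt_trichotomy x j₀ with h | h | h
          · exact absurd (hj0least (Finset.mem_range.2 h)) hxs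
          · exact absurd h hxj
          · exact h
        have hge1 : 1 ≤ gapc s x :=
          Finset.card_pos.2 ⟨j₀, Finset.mem_sdiff.2 ⟨Finset.mem_range.2 hlt, hj0s⟩⟩
        have heq := gapc_insert_eq s j₀ x hj0s
        rw [if_pos hlt] at heq
        rw [mem_fillF_iff _ k N x hxN hxi, hcard]
        omega

lemma gapc_le_of_below_filled (s : Finset ℕ) (k N v : ℕ) (hs : s ⊆ Finset.range N)
    (hsk : s.card ≤ k) (hkN : k ≤ N)
    (h : ∀ z, z < v → z ∉ s → z ∈ fillF s k N) : gapc s v ≤ k - s.card := by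
  have hsub : Finset.range v \ s ⊆ fillF s k N \ s := by
    intro z hz
    obtain ⟨hz1, hz2⟩ := Finset.mem_sdiff.1 hz
    exact Finset.mem_sdiff.2 ⟨h z (Finset.mem_range.1 hz1) hz2, hz2⟩
  calc gapc s v ≤ (fillF s k N \ s).card := Finset.card_le_card hsub
    _ = k - s.card := card_fill_sdiff s k N hs hsk hkN

lemma fillF_erase_high (s : Finset ℕ) (k N jv : ℕ) (hs : s ⊆ Finset.range N)
    (hsk : s.card ≤ k) (hkN : k ≤ N) (hjv : jv ∈ s)
    (hA : ∀ u, u < N → u ∉ fillF s k N → jv < u) :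
    fillF (s.erase jv) k N = fillF s k N := by
  have hes : s.erase jv ⊆ Finset.range N := (Finset.erase_subset _ _).trans hs
  have hcard : (s.erase jv).card = s.card - 1 := Finset.card_erase_of_mem hjv
  have hspos : 1 ≤ s.card := Finset.card_pos.2 ⟨jv, hjv⟩
  have hjN : jv < N := Finset.mem_range.1 (hs hjv)
  ext x
  constructor
  · intro hx
    by_cases hxs : x ∈ s.erase jv
    · exact subset_fillF s k N (Finset.mem_erase.1 hxs).2
    · have hxN : x < N := Finset.mem_range.1 (fillF_subset_range _ k N hes hx)
      by_cases hxj : x = jv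
      · exact hxj ▸ subset_fillF s k N hjv
      · have hxs' : x ∉ s := fun h => hxs (Finset.mem_erase.2 ⟨hxj, h⟩)
        by_contra hxF
        have hlt : jv < x := hA x hxN hxF
        rw [mem_fillF_iff _ k N x hxN hxs, hcard] at hx
        have heq := gapc_erase_eq s jv x hjv
        rw [if_pos hlt] at heq
        rw [mem_fillF_iff s k N x hxN hxs'] at hxF
        omega
  · intro hx
    by_cases hxs : x ∈ s
    · by_cases hxj : x = jv
      · -- show jv ∈ fill (s.erase jv)
        rw [hxj]
        have hxs' : jv ∉ s.erase jv := by simp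
        rw [mem_fillF_iff _ k N jv hjN hxs', hcard]
        have heq := gapc_erase_eq s jv jv hjv
        rw [if_neg (lt_irrefl jv)] at heq
        have hbound : gapc s jv ≤ k - s.card := by
          apply gapc_le_of_below_filled s k N jv hs hsk hkN
          intro z hz hzs
          by_contra hzF
          have := hA z (by omega) hzF
          omega
        omega
      · exact subset_fillF _ k N (Finset.mem_erase.2 ⟨hxj, hxs⟩)
    · have hxN : x < N := Finset.mem_range.1 (fillF_subset_range s k N hs hx)
      have hxj : x ≠ jv := fun h => hxs (h ▸ hjv)
      have hxs' : x ∉ s.erase jv := fun h => hxs (Finset.mem_erase.1 h).2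
      rw [mem_fillF_iff s k N x hxN hxs] at hx
      rw [mem_fillF_iff _ k N x hxN hxs', hcard]
      have heq := gapc_erase_eq s jv x hjv
      by_cases hlt : jv < x
      · rw [if_pos hlt] at heq; omega
      · rw [if_neg hlt] at heq; omega

lemma fillF_erase_low (s : Finset ℕ) (k N jv u₀ : ℕ) (hs : s ⊆ Finset.range N)
    (hsk : s.card ≤ k) (hkN : k ≤ N) (hjv : jv ∈ s)
    (hu₀N : u₀ < N) (hu₀F : u₀ ∉ fillF s k N) (hu₀jv : u₀ < jv)
    (hmin : ∀ z, z < u₀ → z ∈ fillF s k N) :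
    fillF (s.erase jv) k N = insert u₀ ((fillF s k N).erase jv) := by
  have hes : s.erase jv ⊆ Finset.range N := (Finset.erase_subset _ _).trans hs
  have hcard : (s.erase jv).card = s.card - 1 := Finset.card_erase_of_mem hjv
  have hspos : 1 ≤ s.card := Finset.card_pos.2 ⟨jv, hjv⟩
  have hjN : jv < N := Finset.mem_range.1 (hs hjv)
  have hu₀s : u₀ ∉ s := fun h => hu₀F (subset_fillF s k N h)
  have hgap_u₀_ge : k - s.card ≤ gapc s u₀ := by
    rw [mem_fillF_iff s k N u₀ hu₀N hu₀s] at hu₀F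
    omega
  have hgap_u₀_le : gapc s u₀ ≤ k - s.card := by
    apply gapc_le_of_below_filled s k N u₀ hs hsk hkN
    intro z hz _
    exact hmin z hz
  have hgap_u₀ : gapc s u₀ = k - s.card := le_antisymm hgap_u₀_le hgap_u₀_ge
  -- for v > u₀ : gapc s v ≥ k - s.card + 1
  have hgap_big : ∀ v, u₀ < v → k - s.card + 1 ≤ gapc s v := by
    intro v hv
    have hsub : insert u₀ (Finset.range u₀ \ s) ⊆ Finset.range v \ s := by
      intro z hz
      rcases Finset.mem_insert.1 hz with rfl | hz
      · exact Finset.mem_sdiff.2 ⟨Finset.mem_range.2 hv, hu₀s⟩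
      · obtain ⟨h1, h2⟩ := Finset.mem_sdiff.1 hz
        exact Finset.mem_sdiff.2 ⟨Finset.mem_range.2 (by
          have := Finset.mem_range.1 h1; omega), h2⟩
    have := Finset.card_le_card hsub
    rw [Finset.card_insert_of_notMem (by simp [hu₀s])] at this
    have : gapc s u₀ + 1 ≤ gapc s v := this
    omega
  ext x
  constructor
  · intro hx
    by_cases hxs : x ∈ s.erase jv
    · obtain ⟨hxj, hxs⟩ := Finset.mem_erase.1 hxs
      exact Finset.mem_insert_of_mem (Finset.mem_erase.2 ⟨hxj, subset_fillF s k N hxs⟩)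
    · have hxN : x < N := Finset.mem_range.1 (fillF_subset_range _ k N hes hx)
      rw [mem_fillF_iff _ k N x hxN hxs, hcard] at hx
      by_cases hxj : x = jv
      · -- impossible: gapc s' jv too big
        exfalso
        have heq := gapc_erase_eq s jv jv hjv
        rw [if_neg (lt_irrefl jv)] at heq
        have hbig := hgap_big jv hu₀jv
        rw [hxj] at hx
        omega
      · have hxs' : x ∉ s := fun h => hxs (Finset.mem_erase.2 ⟨hxj, h⟩)
        by_cases hxu : x = u₀
        · exact hxu ▸ Finset.mem_insert_self _ _
        · -- show x ∈ F
          have heq := gapc_erase_eq s jv x hjv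
          have hxF : x ∈ fillF s k N := by
            rw [mem_fillF_iff s k N x hxN hxs']
            rcases Nat.lt_trichotomy x u₀ with h | h | h
            · have := hmin x h
              rw [mem_fillF_iff s k N x hxN hxs'] at this
              exact this
            · exact absurd h hxu
            · have := hgap_big x h
              by_cases hlt : jv < x
              · rw [if_pos hlt] at heq; omega
              · rw [if_neg hlt] at heq; omega
          exact Finset.mem_insert_of_mem (Finset.mem_erase.2 ⟨hxj, hxF⟩)
  · intro hx
    rcases Finset.mem_insert.1 hx with rfl | hx
    · -- u₀ ∈ fill (s.erase jv)
      have hxs' : x ∉ s.erase jv := fun h => hu₀s (Finset.mem_erase.1 h).2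
      rw [mem_fillF_iff _ k N x hu₀N hxs', hcard]
      have heq := gapc_erase_eq s jv x hjv
      rw [if_neg (by omega)] at heq
      omega
    · obtain ⟨hxj, hxF⟩ := Finset.mem_erase.1 hx
      have hxN : x < N := Finset.mem_range.1 (fillF_subset_range s k N hs hxF)
      by_cases hxs : x ∈ s
      · exact subset_fillF _ k N (Finset.mem_erase.2 ⟨hxj, hxs⟩)
      · have hxs' : x ∉ s.erase jv := fun h => hxs (Finset.mem_erase.1 h).2
        rw [mem_fillF_iff s k N x hxN hxs] at hxF
        rw [mem_fillF_iff _ k N x hxN hxs', hcard]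
        have heq := gapc_erase_eq s jv x hjv
        by_cases hlt : jv < x
        · rw [if_pos hlt] at heq; omega
        · rw [if_neg hlt] at heq; omega

/-- the dichotomy for erasing an element -/
lemma fillF_erase_cases (s : Finset ℕ) (k N jv : ℕ) (hs : s ⊆ Finset.range N)
    (hsk : s.card ≤ k) (hkN : k ≤ N) (hjv : jv ∈ s) :
    fillF (s.erase jv) k N = fillF s k N ∨
    ∃ w, w < jv ∧ w ∉ fillF s k N ∧
      fillF (s.erase jv) k N = insert w ((fillF s k N).erase jv) := by
  classical
  by_cases hA : ∀ u, u < N → u ∉ fillF s k N → jv < u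
  · exact Or.inl (fillF_erase_high s k N jv hs hsk hkN hjv hA)
  · push_neg at hA
    obtain ⟨u, huN, huF, hujv⟩ := hA
    have hune : u ≠ jv := fun h => huF (h ▸ subset_fillF s k N hjv)
    set T := (Finset.range N).filter (fun z => z ∉ fillF s k N) with hT
    have hTne : T.Nonempty := ⟨u, Finset.mem_filter.2 ⟨Finset.mem_range.2 huN, huF⟩⟩
    set u₀ := T.min' hTne with hu₀
    have hu₀T : u₀ ∈ T := T.min'_mem hTne
    obtain ⟨hu₀N, hu₀F⟩ := Finset.mem_filter.1 hu₀T
    rw [Finset.mem_range] at hu₀N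
    have hu₀le : u₀ ≤ u := T.min'_le u (Finset.mem_filter.2 ⟨Finset.mem_range.2 huN, huF⟩)
    have hu₀jv : u₀ < jv := by omega
    have hmin : ∀ z, z < u₀ → z ∈ fillF s k N := by
      intro z hz
      by_contra hzF
      have hzT : z ∈ T := Finset.mem_filter.2 ⟨Finset.mem_range.2 (by omega), hzF⟩
      have := T.min'_le z hzT
      omega
    exact Or.inr ⟨u₀, hu₀jv, hu₀F,
      fillF_erase_low s k N jv u₀ hs hsk hkN hjv hu₀N hu₀F hu₀jv hmin⟩

-- Section 6: globF machinery

lemma initF_eq (F : Finset ℕ) (y : ℕ) (h1 : Finset.range y ⊆ F) (h2 : y ∉ F) :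
    initF F = y := by
  have hge : y ≤ initF F := le_initF_of_sub F y h1
  by_contra hne
  have : initF F ∈ Finset.range y → False := fun h => (by omega : ¬ initF F < y) (Finset.mem_range.1 h)
  exact this (by
    have : initF F < y ∨ y < initF F := by omega
    rcases this with h | h
    · exact Finset.mem_range.2 h
    · exact absurd (initF_sub F (Finset.mem_range.2 h)) h2)

lemma offF_succ (b : ℕ → ℕ) (i : ℕ) : offF b (i + 1) = offF b i + b i :=
  Finset.sum_range_succ b i

lemma offF_mono (b : ℕ → ℕ) {i j : ℕ} (h : i ≤ j) : offF b i ≤ offF b j := by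
  unfold offF
  exact Finset.sum_le_sum_of_subset (Finset.range_subset_range.2 h)

lemma offF_congr (b b' : ℕ → ℕ) (i : ℕ) (h : ∀ t, t < i → b t = b' t) :
    offF b i = offF b' i :=
  Finset.sum_congr rfl (fun t ht => h t (Finset.mem_range.1 ht))

lemma mem_globF {m : ℕ} {b : ℕ → ℕ} {τ : ℕ → Finset ℕ} {x : ℕ} :
    x ∈ globF m b τ ↔ ∃ t, t < m ∧ ∃ j, j ∈ τ t ∧ j < b t ∧ x = offF b t + j := by
  unfold globF
  simp only [Finset.mem_biUnion, Finset.mem_image, Finset.mem_range, Finset.mem_inter]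
  constructor
  · rintro ⟨t, ht, j, ⟨hj1, hj2⟩, rfl⟩
    exact ⟨t, ht, j, hj1, hj2, rfl⟩
  · rintro ⟨t, ht, j, hj1, hj2, rfl⟩
    exact ⟨t, ht, j, ⟨hj1, hj2⟩, rfl⟩

lemma glob_window {b : ℕ → ℕ} {t t' j j' : ℕ} (hj : j < b t) (hj' : j' < b t')
    (he : offF b t + j = offF b t' + j') : t = t' ∧ j = j' := by
  have key : ∀ s s' i i', i < b s → i' < b s' → offF b s + i = offF b s' + i' → ¬ (s < s') := by
    intro s s' i i' hi hi' heq hss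
    have h1 : offF b s + i < offF b (s + 1) := by rw [offF_succ]; omega
    have h2 : offF b (s + 1) ≤ offF b s' := offF_mono b hss
    omega
  have h1 := key t t' j j' hj hj' he
  have h2 := key t' t j' j hj' hj he.symm
  have : t = t' := by omega
  subst this
  exact ⟨rfl, by omega⟩

lemma card_globF (m : ℕ) (b : ℕ → ℕ) (τ : ℕ → Finset ℕ) :
    (globF m b τ).card = ∑ t ∈ Finset.range m, (τ t ∩ Finset.range (b t)).card := by
  unfold globF
  rw [Finset.card_biUnion]
  · apply Finset.sum_congr rfl
    intro t _
    apply Finset.card_image_of_injective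
    intro x y h
    simpa using h
  · intro t ht t' ht' htt'
    rw [Function.onFun, Finset.disjoint_left]
    rintro x hx hx'
    obtain ⟨j, hj, rfl⟩ := Finset.mem_image.1 hx
    obtain ⟨j', hj', he⟩ := Finset.mem_image.1 hx'
    have h1 : j < b t := Finset.mem_range.1 (Finset.mem_inter.1 hj).2
    have h2 : j' < b t' := Finset.mem_range.1 (Finset.mem_inter.1 hj').2
    exact htt' (glob_window h1 h2 he.symm).1

lemma glob_cover (m : ℕ) (b : ℕ → ℕ) (p u : ℕ) (hu : u < offF b p) :
    ∃ t, t < p ∧ offF b t ≤ u ∧ u < offF b t + b t := by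
  induction p with
  | zero => simp [offF] at hu
  | succ q ih =>
    by_cases h : u < offF b q
    · obtain ⟨t, ht, h1, h2⟩ := ih h
      exact ⟨t, by omega, h1, h2⟩
    · rw [offF_succ] at hu
      exact ⟨q, by omega, by omega, by omega⟩

lemma glob_range_sub (m : ℕ) (b : ℕ → ℕ) (τ : ℕ → Finset ℕ) (p c : ℕ) (hp : p < m)
    (hfull : ∀ t, t < p → Finset.range (b t) ⊆ τ t)
    (hc1 : Finset.range c ⊆ τ p) (hc2 : c ≤ b p) :
    Finset.range (offF b p + c) ⊆ globF m b τ := by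
  intro u hu
  rw [Finset.mem_range] at hu
  rw [mem_globF]
  by_cases h : u < offF b p
  · obtain ⟨t, ht, h1, h2⟩ := glob_cover m b p u h
    exact ⟨t, by omega, u - offF b t,
      hfull t ht (Finset.mem_range.2 (by omega)), by omega, by omega⟩
  · exact ⟨p, hp, u - offF b p,
      hc1 (Finset.mem_range.2 (by omega)), by omega, by omega⟩

lemma glob_notmem (m : ℕ) (b : ℕ → ℕ) (τ : ℕ → Finset ℕ) (p j₀ : ℕ)
    (hj : j₀ < b p) (hjτ : j₀ ∉ τ p) : offF b p + j₀ ∉ globF m b τ := by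
  rw [mem_globF]
  rintro ⟨t, ht, j, hj1, hj2, he⟩
  obtain ⟨rfl, rfl⟩ := glob_window hj hj2 he
  exact hjτ hj1

lemma initF_glob (m : ℕ) (b : ℕ → ℕ) (τ : ℕ → Finset ℕ) (p j₀ : ℕ) (hp : p < m)
    (hfull : ∀ t, t < p → Finset.range (b t) ⊆ τ t)
    (hj0 : Finset.range j₀ ⊆ τ p) (hj0b : j₀ < b p) (hj0τ : j₀ ∉ τ p) :
    initF (globF m b τ) = offF b p + j₀ :=
  initF_eq _ _ (glob_range_sub m b τ p j₀ hp hfull hj0 (by omega))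
    (glob_notmem m b τ p j₀ hj0b hj0τ)

-- Section 7a: glue

lemma eq_of_tailc_eq (p q : Multiset ℕ) (h : ∀ x, tailc p x = tailc q x) : p = q := by
  ext a
  have h1 := tailc_succ p a
  have h2 := tailc_succ q a
  have h3 := h a
  have h4 := h (a + 1)
  omega

lemma glue (μ₀ μ₁ μ'₀ μ'₁ : Multiset ℕ)
    (hA : Multiset.card μ'₀ + Multiset.card μ'₁ ≤ Multiset.card μ₀ + Multiset.card μ₁)
    (hB : ∀ x, tailc μ'₁ x ≤ tailc μ₁ x)
    (hC : μ'₁ = μ₁ → ∀ x, tailc μ'₀ x ≤ tailc μ₀ x) :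
    ∃ ν₀ ν₁ : Multiset ℕ, ν₀ ≤ μ₀ ∧ ν₁ ≤ μ₁ ∧
      Multiset.card ν₀ + Multiset.card ν₁ = Multiset.card μ'₀ + Multiset.card μ'₁ ∧
      ((μ'₀ = ν₀ ∧ μ'₁ = ν₁) ∨ MonRevGT2 μ'₀ μ'₁ ν₀ ν₁) := by
  set tot := Multiset.card μ'₀ + Multiset.card μ'₁ with htot
  set k1 := min (Multiset.card μ₁) tot with hk1
  set k0 := tot - k1 with hk0
  have hk1le : k1 ≤ Multiset.card μ₁ := min_le_left _ _
  have hc1' : Multiset.card μ'₁ ≤ Multiset.card μ₁ := by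
    have := hB 0
    rwa [tailc_zero, tailc_zero] at this
  have hk0le : k0 ≤ Multiset.card μ₀ := by omega
  obtain ⟨ν₁, hν₁le, hν₁card, hν₁tail⟩ := exists_nu μ₁ k1 hk1le
  obtain ⟨ν₀, hν₀le, hν₀card, hν₀tail⟩ := exists_nu μ₀ k0 hk0le
  have hcards : Multiset.card ν₀ + Multiset.card ν₁ = tot := by omega
  have hcmp1 : ∀ x, tailc μ'₁ x ≤ tailc ν₁ x := by
    intro x
    rw [hν₁tail x]
    have h1 := hB x
    have h2 := tailc_le_card μ'₁ x
    omega
  rcases revlex_of_tailc_le μ'₁ ν₁ hcmp1 with heq1 | hgt1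
  · -- μ'₁ = ν₁
    have hcard1 : Multiset.card μ'₁ = k1 := heq1 ▸ hν₁card
    have hcard0 : Multiset.card μ'₀ = k0 := by omega
    have hcmp0 : ∀ x, tailc μ'₀ x ≤ tailc ν₀ x := by
      intro x
      rw [hν₀tail x]
      have h2 : tailc μ'₀ x ≤ k0 := hcard0 ▸ tailc_le_card μ'₀ x
      have h3 : tailc μ'₀ x ≤ tailc μ₀ x := by
        by_cases hmin : Multiset.card μ₁ ≤ tot
        · -- k1 = card μ₁, so ν₁ = μ₁ and μ'₁ = μ₁
          have hν₁eq : ν₁ = μ₁ := by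
            apply eq_of_tailc_eq
            intro z
            rw [hν₁tail z]
            have := tailc_le_card μ₁ z
            omega
          exact hC (heq1.trans hν₁eq) x
        · -- k0 = 0 so μ'₀ = 0
          have : k1 = tot := by omega
          have h0 : Multiset.card μ'₀ = 0 := by omega
          rw [Multiset.card_eq_zero.1 h0]
          simp [tailc]
      omega
    rcases revlex_of_tailc_le μ'₀ ν₀ hcmp0 with heq0 | hgt0
    · exact ⟨ν₀, ν₁, hν₀le, hν₁le, hcards, Or.inl ⟨heq0, heq1⟩⟩
    · exact ⟨ν₀, ν₁, hν₀le, hν₁le, hcards, Or.inr (Or.inr ⟨heq1, hgt0⟩)⟩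
  · exact ⟨ν₀, ν₁, hν₀le, hν₁le, hcards, Or.inr (Or.inl hgt1)⟩

-- Section 7b: main core

lemma bfun_eq (a n : ℕ → ℕ) (τ : ℕ → Finset ℕ) (t : ℕ) (h1 : τ t ⊆ Finset.range (n t))
    (h2 : (τ t).card ≤ a t) (h3 : a t ≤ n t) :
    bfun a n τ t = initF (fillF (τ t) (a t) (n t)) ∧
    Multiset.card (PhiBlock a n τ t) + initF (fillF (τ t) (a t) (n t)) = a t := by
  have hc := card_fillF (τ t) (a t) (n t) h1 h2 h3
  have hp := card_phiMap_add_initF (fillF (τ t) (a t) (n t))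
  unfold bfun PhiBlock at *
  omega

lemma main_core (m : ℕ) (n a : ℕ → ℕ) (τ : ℕ → Finset ℕ)
    (hτ1 : ∀ i, i < m → τ i ⊆ Finset.range (n i))
    (hτ2 : ∀ i, i < m → (τ i).card ≤ a i)
    (ha : ∀ i, i < m → 0 < a i ∧ a i ≤ n i)
    (iv i₀ jv j₀ : ℕ) (hiv : iv < m) (hi₀ : i₀ < m) (hi₀iv : i₀ ≤ iv)
    (hjv : jv ∈ τ iv) (hj₀n : j₀ < n i₀) (hj₀τ : j₀ ∉ τ i₀)
    (hj₀least : Finset.range j₀ ⊆ τ i₀)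
    (hcase : (i₀ = iv ∧ (τ iv).card = a iv ∧ j₀ < jv) ∨
      ((τ i₀).card < a i₀ ∧ (∀ t, t < i₀ → (τ t).card = a t) ∧
        (i₀ < iv ∨ (i₀ = iv ∧ j₀ < jv))))
    (τ' : ℕ → Finset ℕ)
    (hτ' : τ' = fun t => (if t = i₀ then insert j₀ else id)
        (if t = iv then (τ t).erase jv else τ t)) :
    (Multiset.card (PhiMapT m a n τ' 0) + Multiset.card (PhiMapT m a n τ' (iv + 1))
      ≤ Multiset.card (PhiMapT m a n τ 0) + Multiset.card (PhiMapT m a n τ (iv + 1))) ∧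
    (∀ x, tailc (PhiMapT m a n τ' (iv + 1)) x ≤ tailc (PhiMapT m a n τ (iv + 1)) x) ∧
    (PhiMapT m a n τ' (iv + 1) = PhiMapT m a n τ (iv + 1) →
      ∀ x, tailc (PhiMapT m a n τ' 0) x ≤ tailc (PhiMapT m a n τ 0) x) := by
  classical
  -- τ' values
  have hvA : i₀ = iv → τ' iv = insert j₀ ((τ iv).erase jv) := by
    intro h; simp [hτ', ← h]
  have hvB : i₀ ≠ iv → τ' iv = (τ iv).erase jv := by
    intro h; simp [hτ', Ne.symm h]
  have hvC : i₀ ≠ iv → τ' i₀ = insert j₀ (τ i₀) := by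
    intro h; simp [hτ', h]
  have hvD : ∀ t, t ≠ iv → t ≠ i₀ → τ' t = τ t := by
    intro t h1 h2; simp [hτ', h1, h2]
  -- basic block-iv facts
  have hsub : τ iv ⊆ Finset.range (n iv) := hτ1 iv hiv
  have hsk : (τ iv).card ≤ a iv := hτ2 iv hiv
  have hkN : a iv ≤ n iv := (ha iv hiv).2
  have hapos : 0 < a iv := (ha iv hiv).1
  have hspos : 1 ≤ (τ iv).card := Finset.card_pos.2 ⟨jv, hjv⟩
  have hjvN : jv < n iv := Finset.mem_range.1 (hsub hjv)
  set F : Finset ℕ := fillF (τ iv) (a iv) (n iv) with hF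
  set F' : Finset ℕ := fillF (τ' iv) (a iv) (n iv) with hF'
  have hτ'sub : τ' iv ⊆ Finset.range (n iv) := by
    by_cases hEq : i₀ = iv
    · rw [hvA hEq]
      intro z hz
      rcases Finset.mem_insert.1 hz with rfl | hz
      · exact Finset.mem_range.2 (by omega)
      · exact hsub (Finset.erase_subset _ _ hz)
    · rw [hvB hEq]
      exact (Finset.erase_subset _ _).trans hsub
  have hτ'card : (τ' iv).card ≤ a iv := by
    by_cases hEq : i₀ = iv
    · rw [hvA hEq]
      have h1 := Finset.card_insert_le j₀ ((τ iv).erase jv)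
      have h2 := Finset.card_erase_of_mem hjv
      omega
    · rw [hvB hEq]
      have h2 := Finset.card_erase_of_mem hjv
      omega
  have hjvF : jv ∈ F := subset_fillF _ _ _ hjv
  -- the dichotomy
  have hdich : F' = F ∨ ∃ w, w < jv ∧ w ∉ F ∧ F' = insert w (F.erase jv) := by
    rcases hcase with ⟨hEq, hfull, hj0jv⟩ | ⟨hc0, hfulls, hor⟩
    · -- up
      have hFs : F = τ iv := fillF_card_eq _ _ _ hfull
      have hj₀s : j₀ ∉ τ iv := hEq ▸ hj₀τ
      have hcard' : (τ' iv).card = a iv := by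
        rw [hvA hEq, Finset.card_insert_of_notMem
          (fun h => hj₀s (Finset.erase_subset _ _ h)), Finset.card_erase_of_mem hjv]
        omega
      right
      refine ⟨j₀, hj0jv, hFs ▸ hj₀s, ?_⟩
      rw [hF', fillF_card_eq _ _ _ hcard', hvA hEq, hFs]
    · -- tail
      by_cases hEq : i₀ = iv
      · have hj0jv : j₀ < jv := by
          rcases hor with h | h
          · omega
          · exact h.2
        have hcv : (τ iv).card < a iv := by rw [← hEq]; exact hEq ▸ hc0
        have hstep : F' = fillF ((τ iv).erase jv) (a iv) (n iv) := by
          rw [hF', hvA hEq]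
          apply fillF_insert_least
          · exact (Finset.erase_subset _ _).trans hsub
          · rw [Finset.card_erase_of_mem hjv]; omega
          · exact hkN
          · omega
          · exact fun h => (hEq ▸ hj₀τ) (Finset.erase_subset _ _ h)
          · intro z hz
            rw [Finset.mem_range] at hz
            exact Finset.mem_erase.2 ⟨by omega, hEq ▸ hj₀least (Finset.mem_range.2 hz)⟩
        rw [hstep]
        exact fillF_erase_cases (τ iv) (a iv) (n iv) jv hsub hsk hkN hjv
      · rw [hF', hvB hEq]
        exact fillF_erase_cases (τ iv) (a iv) (n iv) jv hsub hsk hkN hjv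
  set β := initF F with hβ
  set β' := initF F' with hβ'
  have hββ' : β ≤ β' := by
    rcases hdich with h | ⟨w, hw1, hw2, hw3⟩
    · exact le_of_eq (by rw [hβ, hβ', h])
    · apply le_initF_of_sub
      rw [hw3]
      intro z hz
      rw [Finset.mem_range] at hz
      have hzF : z ∈ F := initF_sub F (Finset.mem_range.2 hz)
      have hβw : β ≤ w := by
        by_contra hc
        exact hw2 (initF_sub F (Finset.mem_range.2 (by omega)))
      exact Finset.mem_insert_of_mem (Finset.mem_erase.2 ⟨by omega, hzF⟩)
  have hbeq := bfun_eq a n τ iv hsub hsk hkN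
  have hbeq' := bfun_eq a n τ' iv hτ'sub hτ'card hkN
  have hμ1c : Multiset.card (phiMap F) + β = a iv := hbeq.2
  have hμ1c' : Multiset.card (phiMap F') + β' = a iv := hbeq'.2
  set b := bfun a n τ with hb
  set b' := bfun a n τ' with hb'
  have hbiv : b iv = β := hbeq.1
  have hbiv' : b' iv = β' := hbeq'.1
  have hbt : ∀ t, t ≠ iv → b' t = b t := by
    intro t ht
    have hfe : fillF (τ' t) (a t) (n t) = fillF (τ t) (a t) (n t) := by
      by_cases hti : t = i₀
      · have hEq : i₀ ≠ iv := fun h => ht (by omega)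
        rcases hcase with ⟨h, _⟩ | ⟨hc0, _, _⟩
        · exact absurd h hEq
        · rw [hti, hvC hEq]
          exact fillF_insert_least (τ i₀) (a i₀) (n i₀) j₀ (hτ1 i₀ hi₀) hc0
            (ha i₀ hi₀).2 hj₀n hj₀τ hj₀least
      · rw [hvD t ht hti]
    rw [hb, hb']
    unfold bfun PhiBlock
    rw [hfe]
  -- μ parts
  have hP1 : PhiMapT m a n τ (iv + 1) = phiMap F := by
    unfold PhiMapT PhiBlock
    simp [Nat.succ_le_of_lt hiv, hF]
  have hP1' : PhiMapT m a n τ' (iv + 1) = phiMap F' := by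
    unfold PhiMapT PhiBlock
    simp [Nat.succ_le_of_lt hiv, hF']
  have hP0 : PhiMapT m a n τ 0 = phiMap (globF m b τ) := by
    unfold PhiMapT
    simp [hb]
  have hP0' : PhiMapT m a n τ' 0 = phiMap (globF m b' τ') := by
    unfold PhiMapT
    simp [hb']
  set G := globF m b τ with hG
  set G' := globF m b' τ' with hG'
  have hGc0 : Multiset.card (phiMap G) + initF G = G.card := card_phiMap_add_initF G
  have hGc0' : Multiset.card (phiMap G') + initF G' = G'.card := card_phiMap_add_initF G'
  -- B'
  have hμB : ∀ x, tailc (phiMap F') x ≤ tailc (phiMap F) x := by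
    intro x
    rcases Nat.eq_zero_or_pos x with rfl | hx
    · rw [tailc_zero, tailc_zero]; omega
    · rw [tailc_phiMap _ _ hx, tailc_phiMap _ _ hx]
      rcases hdich with h | ⟨w, hw1, hw2, hw3⟩
      · rw [h]
      · rw [hw3]
        exact tgap_swap F jv w hjvF hw2 hw1 x
  -- the two global keys (per case)
  have hofflow : ∀ t, t ≤ iv → offF b' t = offF b t := by
    intro t ht
    exact offF_congr b' b t (fun r hr => hbt r (by omega))
  have hoffhigh : ∀ t, iv < t → offF b' t = offF b t + (β' - β) := by
    intro t ht
    induction t, ht using Nat.le_induction with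
    | base =>
      rw [offF_succ, offF_succ, hofflow iv le_rfl, hbiv, hbiv']
      omega
    | succ t ht ih =>
      rw [offF_succ, offF_succ, ih, hbt t (by omega)]
      omega
  have hkeys : (G'.card + initF G ≤ G.card + (β' - β) + initF G') ∧
      (phiMap F' = phiMap F → ∀ x, tailc (phiMap G') x ≤ tailc (phiMap G) x) := by
    rcases hcase with ⟨hEq, hfull, hj0jv⟩ | ⟨hc0, hfulls, hor⟩
    · -- UP case
      have hFs : F = τ iv := fillF_card_eq _ _ _ hfull
      have hj₀s : j₀ ∉ τ iv := hEq ▸ hj₀τ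
      have hcard' : (τ' iv).card = a iv := by
        rw [hvA hEq, Finset.card_insert_of_notMem
          (fun h => hj₀s (Finset.erase_subset _ _ h)), Finset.card_erase_of_mem hjv]
        omega
      have hF's : F' = τ' iv := fillF_card_eq _ _ _ hcard'
      have hβj₀ : β = j₀ := by
        rw [hβ, hFs]
        exact initF_eq (τ iv) j₀ (hEq ▸ hj₀least) hj₀s
      have hβ'j₀ : j₀ + 1 ≤ β' := by
        apply le_initF_of_sub
        rw [hF's, hvA hEq]
        intro z hz
        rw [Finset.mem_range] at hz
        rcases Nat.lt_or_ge z j₀ with h | h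
        · exact Finset.mem_insert_of_mem
            (Finset.mem_erase.2 ⟨by omega, hEq ▸ hj₀least (Finset.mem_range.2 h)⟩)
        · have : z = j₀ := by omega
          exact this ▸ Finset.mem_insert_self _ _
      have hrβ : Finset.range β ⊆ τ iv := hFs ▸ initF_sub F
      have hrβ' : Finset.range β' ⊆ τ' iv := by rw [← hF's]; exact initF_sub F'
      have hCiv : (τ iv ∩ Finset.range (b iv)).card = β := by
        rw [hbiv, Finset.inter_eq_right.2 hrβ, Finset.card_range]
      have hCiv' : (τ' iv ∩ Finset.range (b' iv)).card = β' := by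
        rw [hbiv', Finset.inter_eq_right.2 hrβ', Finset.card_range]
      have hrest : ∑ t ∈ (Finset.range m).erase iv, (τ' t ∩ Finset.range (b' t)).card
          = ∑ t ∈ (Finset.range m).erase iv, (τ t ∩ Finset.range (b t)).card := by
        apply Finset.sum_congr rfl
        intro t ht
        have htne : t ≠ iv := (Finset.mem_erase.1 ht).1
        rw [hvD t htne (by omega), hbt t htne]
      have hGcard : G.card = β + ∑ t ∈ (Finset.range m).erase iv,
          (τ t ∩ Finset.range (b t)).card := by
        rw [hG, card_globF, ← Finset.add_sum_erase _ _ (Finset.mem_range.2 hiv), hCiv]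
      have hGcard' : G'.card = β' + ∑ t ∈ (Finset.range m).erase iv,
          (τ t ∩ Finset.range (b t)).card := by
        rw [hG', card_globF, ← Finset.add_sum_erase _ _ (Finset.mem_range.2 hiv), hCiv', hrest]
      have hinit : initF G ≤ initF G' := by
        apply le_initF_of_sub
        intro u hu
        have huG : u ∈ G := initF_sub G hu
        rw [Finset.mem_range] at hu
        rw [hG, mem_globF] at huG
        obtain ⟨t, ht, j, hjt, hjb, hue⟩ := huG
        rw [hG', mem_globF]
        rcases Nat.lt_trichotomy t iv with htv | htv | htv
        · exact ⟨t, ht, j, by rw [hvD t (by omega) (by omega)]; exact hjt,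
            by rw [hbt t (by omega)]; exact hjb, by rw [hofflow t (by omega)]; exact hue⟩
        · subst htv
          refine ⟨t, ht, j, ?_, ?_, ?_⟩
          · exact hrβ' (Finset.mem_range.2 (by rw [hbiv] at hjb; omega))
          · rw [hbiv']; rw [hbiv] at hjb; omega
          · rw [hofflow t le_rfl]; exact hue
        · -- t > iv
          by_cases hlow : u < offF b iv + β'
          · have hoffle : offF b iv ≤ u := by
              have h1 : offF b iv ≤ offF b t := offF_mono b (by omega)
              omega
            refine ⟨iv, hiv, u - offF b iv, ?_, ?_, ?_⟩
            · exact hrβ' (Finset.mem_range.2 (by omega))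
            · rw [hbiv']; omega
            · rw [hofflow iv le_rfl]; omega
          · have hge : offF b iv + β' ≤ u := by omega
            set v := u - (β' - β) with hv
            have hvge : offF b iv + β ≤ v := by omega
            have hvG : v ∈ G := initF_sub G (Finset.mem_range.2 (by omega))
            rw [hG, mem_globF] at hvG
            obtain ⟨t', ht', j', hj't, hj'b, hveq⟩ := hvG
            have ht'iv : iv < t' := by
              by_contra hc
              push_neg at hc
              have h1 : offF b t' + b t' ≤ offF b iv + β := by
                have h2 : offF b (t' + 1) ≤ offF b iv + β := by
                  rcases Nat.eq_or_lt_of_le hc with h | h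
                  · rw [h, offF_succ, hbiv]
                  · calc offF b (t' + 1) ≤ offF b iv := offF_mono b (by omega)
                      _ ≤ offF b iv + β := by omega
                rw [offF_succ] at h2
                exact h2
              omega
            refine ⟨t', ht', j', ?_, ?_, ?_⟩
            · rw [hvD t' (by omega) (by omega)]; exact hj't
            · rw [hbt t' (by omega)]; exact hj'b
            · rw [hoffhigh t' ht'iv]; omega
      constructor
      · omega
      · intro hμeq
        exfalso
        have := congrArg Multiset.card hμeq
        omega
    · -- TAIL case
      have hfullsub : ∀ t, t < i₀ → Finset.range (b t) ⊆ τ t := by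
        intro t htl
        have htm : t < m := by omega
        have hfe : fillF (τ t) (a t) (n t) = τ t := fillF_card_eq _ _ _ (hfulls t htl)
        have hbt2 : b t = initF (τ t) := by
          rw [hb, (bfun_eq a n τ t (hτ1 t htm) (hτ2 t htm) (ha t htm).2).1, hfe]
        intro z hz
        rw [hbt2] at hz
        exact initF_sub (τ t) hz
      have hj₀F₀ : j₀ ∈ fillF (τ i₀) (a i₀) (n i₀) := by
        rw [mem_fillF_iff _ _ _ j₀ hj₀n hj₀τ, (gapc_eq_zero_iff _ _).2 hj₀least]
        omega
      have hbi₀ : b i₀ = initF (fillF (τ i₀) (a i₀) (n i₀)) := by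
        rw [hb]
        exact (bfun_eq a n τ i₀ (hτ1 i₀ hi₀) (hτ2 i₀ hi₀) (ha i₀ hi₀).2).1
      have hj₀b : j₀ < b i₀ := by
        rw [hbi₀]
        have hsub2 : Finset.range (j₀ + 1) ⊆ fillF (τ i₀) (a i₀) (n i₀) := by
          intro z hz
          rw [Finset.mem_range] at hz
          rcases Nat.lt_or_ge z j₀ with h | h
          · exact subset_fillF _ _ _ (hj₀least (Finset.mem_range.2 h))
          · have hzz : z = j₀ := by omega
            exact hzz ▸ hj₀F₀
        have := le_initF_of_sub _ (j₀ + 1) hsub2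
        omega
      have hinitG : initF G = offF b i₀ + j₀ := by
        rw [hG]
        exact initF_glob m b τ i₀ j₀ hi₀ hfullsub hj₀least hj₀b hj₀τ
      have hrτ' : Finset.range (j₀ + 1) ⊆ τ' i₀ ∧ j₀ + 1 ≤ b' i₀ := by
        by_cases hEq : i₀ = iv
        · have hj0jv : j₀ < jv := by
            rcases hor with h | h
            · omega
            · exact h.2
          constructor
          · rw [hEq, hvA hEq]
            intro z hz
            rw [Finset.mem_range] at hz
            rcases Nat.lt_or_ge z j₀ with h | h
            · exact Finset.mem_insert_of_mem
                (Finset.mem_erase.2 ⟨by omega, hEq ▸ hj₀least (Finset.mem_range.2 h)⟩)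
            · have hzz : z = j₀ := by omega
              exact hzz ▸ Finset.mem_insert_self _ _
          · have h1 : j₀ + 1 ≤ β := by
              have h2 : j₀ < b iv := by rw [← hEq]; exact hj₀b
              rw [hbiv] at h2
              omega
            have hrF' : Finset.range (j₀ + 1) ⊆ F' := by
              rcases hdich with h | ⟨w, hw1, hw2, hw3⟩
              · rw [h]
                intro z hz
                rw [Finset.mem_range] at hz
                exact initF_sub F (Finset.mem_range.2 (by omega))
              · rw [hw3]
                intro z hz
                rw [Finset.mem_range] at hz
                refine Finset.mem_insert_of_mem (Finset.mem_erase.2 ⟨by omega, ?_⟩)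
                exact initF_sub F (Finset.mem_range.2 (by omega))
            have := le_initF_of_sub F' (j₀ + 1) hrF'
            rw [hEq, hbiv']
            omega
        · constructor
          · rw [hvC hEq]
            intro z hz
            rw [Finset.mem_range] at hz
            rcases Nat.lt_or_ge z j₀ with h | h
            · exact Finset.mem_insert_of_mem (hj₀least (Finset.mem_range.2 h))
            · have hzz : z = j₀ := by omega
              exact hzz ▸ Finset.mem_insert_self _ _
          · rw [hbt i₀ hEq]
            omega
      have hinitG' : initF G + 1 ≤ initF G' := by
        have hsub' := glob_range_sub m b' τ' i₀ (j₀ + 1) hi₀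
          (fun t htl => by
            rw [hbt t (by omega), hvD t (by omega) (by omega)]
            exact hfullsub t htl)
          hrτ'.1 hrτ'.2
        have hle := le_initF_of_sub (globF m b' τ') _ hsub'
        rw [← hG'] at hle
        have hoff : offF b' i₀ = offF b i₀ := hofflow i₀ hi₀iv
        rw [hoff] at hle
        rw [hinitG]
        omega
      have hsd : (Finset.range β' \ Finset.range β).card = β' - β := by
        rw [Finset.card_sdiff_of_subset (Finset.range_subset_range.2 hββ'), Finset.card_range,
          Finset.card_range]
      have hcardbound : G'.card ≤ G.card + (β' - β) + 1 := by
        rw [hG, hG', card_globF, card_globF]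
        by_cases hEq : i₀ = iv
        · have e1 : ∑ t ∈ Finset.range m, ((τ' t) ∩ Finset.range (b' t)).card
              = ((τ' iv) ∩ Finset.range (b' iv)).card +
                ∑ t ∈ (Finset.range m).erase iv, ((τ' t) ∩ Finset.range (b' t)).card :=
            (Finset.add_sum_erase _ _ (Finset.mem_range.2 hiv)).symm
          have e2 : ∑ t ∈ Finset.range m, ((τ t) ∩ Finset.range (b t)).card
              = ((τ iv) ∩ Finset.range (b iv)).card +
                ∑ t ∈ (Finset.range m).erase iv, ((τ t) ∩ Finset.range (b t)).card :=
            (Finset.add_sum_erase _ _ (Finset.mem_range.2 hiv)).symm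
          have hrest : ∑ t ∈ (Finset.range m).erase iv, ((τ' t) ∩ Finset.range (b' t)).card
              = ∑ t ∈ (Finset.range m).erase iv, ((τ t) ∩ Finset.range (b t)).card :=
            Finset.sum_congr rfl (fun t ht => by
              have htne : t ≠ iv := (Finset.mem_erase.1 ht).1
              rw [hvD t htne (by omega), hbt t htne])
          rw [e1, e2, hrest]
          have hsubset : τ' iv ∩ Finset.range (b' iv) ⊆
              insert j₀ ((τ iv ∩ Finset.range (b iv)) ∪
                (Finset.range β' \ Finset.range β)) := by
            intro z hz
            obtain ⟨hz1, hz2⟩ := Finset.mem_inter.1 hz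
            rw [hvA hEq] at hz1
            rw [hbiv', Finset.mem_range] at hz2
            rcases Finset.mem_insert.1 hz1 with rfl | hz1
            · exact Finset.mem_insert_self _ _
            · apply Finset.mem_insert_of_mem
              rcases Nat.lt_or_ge z β with h | h
              · exact Finset.mem_union_left _ (Finset.mem_inter.2
                  ⟨(Finset.mem_erase.1 hz1).2, by rw [hbiv]; exact Finset.mem_range.2 h⟩)
              · exact Finset.mem_union_right _ (Finset.mem_sdiff.2
                  ⟨Finset.mem_range.2 hz2, by rw [Finset.mem_range]; omega⟩)
          have hb1 := Finset.card_le_card hsubset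
          have hb2 := Finset.card_insert_le j₀ ((τ iv ∩ Finset.range (b iv)) ∪
            (Finset.range β' \ Finset.range β))
          have hb3 := Finset.card_union_le (τ iv ∩ Finset.range (b iv))
            (Finset.range β' \ Finset.range β)
          omega
        · have hi₀lt : i₀ < iv := by omega
          have hi₀mem : i₀ ∈ (Finset.range m).erase iv :=
            Finset.mem_erase.2 ⟨hEq, Finset.mem_range.2 hi₀⟩
          have hrest : ∑ t ∈ ((Finset.range m).erase iv).erase i₀,
                ((τ' t) ∩ Finset.range (b' t)).card
              = ∑ t ∈ ((Finset.range m).erase iv).erase i₀,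
                ((τ t) ∩ Finset.range (b t)).card :=
            Finset.sum_congr rfl (fun t ht => by
              have ht1 : t ≠ i₀ := (Finset.mem_erase.1 ht).1
              have ht2 : t ≠ iv := (Finset.mem_erase.1 (Finset.mem_erase.1 ht).2).1
              rw [hvD t ht2 ht1, hbt t ht2])
          rw [← Finset.add_sum_erase (Finset.range m)
                (fun t => ((τ' t) ∩ Finset.range (b' t)).card) (Finset.mem_range.2 hiv),
              ← Finset.add_sum_erase ((Finset.range m).erase iv)
                (fun t => ((τ' t) ∩ Finset.range (b' t)).card) hi₀mem,
              ← Finset.add_sum_erase (Finset.range m)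
                (fun t => ((τ t) ∩ Finset.range (b t)).card) (Finset.mem_range.2 hiv),
              ← Finset.add_sum_erase ((Finset.range m).erase iv)
                (fun t => ((τ t) ∩ Finset.range (b t)).card) hi₀mem,
              hrest]
          have hsubiv : τ' iv ∩ Finset.range (b' iv) ⊆
              (τ iv ∩ Finset.range (b iv)) ∪ (Finset.range β' \ Finset.range β) := by
            intro z hz
            obtain ⟨hz1, hz2⟩ := Finset.mem_inter.1 hz
            rw [hvB hEq] at hz1
            rw [hbiv', Finset.mem_range] at hz2
            rcases Nat.lt_or_ge z β with h | h
            · exact Finset.mem_union_left _ (Finset.mem_inter.2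
                ⟨(Finset.mem_erase.1 hz1).2, by rw [hbiv]; exact Finset.mem_range.2 h⟩)
            · exact Finset.mem_union_right _ (Finset.mem_sdiff.2
                ⟨Finset.mem_range.2 hz2, by rw [Finset.mem_range]; omega⟩)
          have hsubi₀ : τ' i₀ ∩ Finset.range (b' i₀) ⊆
              insert j₀ (τ i₀ ∩ Finset.range (b i₀)) := by
            intro z hz
            obtain ⟨hz1, hz2⟩ := Finset.mem_inter.1 hz
            rw [hvC hEq] at hz1
            rw [hbt i₀ hEq] at hz2
            rcases Finset.mem_insert.1 hz1 with rfl | hz1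
            · exact Finset.mem_insert_self _ _
            · exact Finset.mem_insert_of_mem (Finset.mem_inter.2 ⟨hz1, hz2⟩)
          have hb1 := Finset.card_le_card hsubiv
          have hb2 := Finset.card_union_le (τ iv ∩ Finset.range (b iv))
            (Finset.range β' \ Finset.range β)
          have hb3 := Finset.card_le_card hsubi₀
          have hb4 := Finset.card_insert_le j₀ (τ i₀ ∩ Finset.range (b i₀))
          omega
      constructor
      · omega
      · -- C part
        intro hμeq
        have hβe : β' = β := by
          have := congrArg Multiset.card hμeq
          omega
        have hbb : ∀ t, b' t = b t := by
          intro t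
          by_cases ht : t = iv
          · rw [ht, hbiv, hbiv', hβe]
          · exact hbt t ht
        have hoffe : ∀ i, offF b' i = offF b i :=
          fun i => offF_congr b' b i (fun t _ => hbb t)
        set y := offF b i₀ + j₀ with hy
        have hyG : y ∉ G := by
          rw [hG]
          exact glob_notmem m b τ i₀ j₀ hj₀b hj₀τ
        have hrangey : Finset.range y ⊆ G := by
          rw [← hinitG]
          exact initF_sub G
        have hyG' : y ∈ G' := by
          rw [hG', mem_globF]
          exact ⟨i₀, hi₀, j₀, hrτ'.1 (Finset.mem_range.2 (by omega)),
            by rw [hbb i₀]; omega, by rw [hoffe i₀]⟩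
        have hGeq : ∀ x, x ∈ G' ↔ x = y ∨ (x ∈ G ∧ (jv < β → x ≠ offF b iv + jv)) := by
          intro x
          constructor
          · intro hx
            rw [hG', mem_globF] at hx
            obtain ⟨t, ht, j, hjτ', hjb', he⟩ := hx
            rw [hoffe t] at he
            rw [hbb t] at hjb'
            by_cases htiv : t = iv
            · rw [htiv] at hjτ' hjb' he
              by_cases hEq2 : i₀ = iv
              · rw [hvA hEq2] at hjτ'
                rcases Finset.mem_insert.1 hjτ' with rfl | hj2
                · left; rw [he, hy, hEq2]
                · right
                  have hxG : x ∈ G := by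
                    rw [hG, mem_globF]
                    exact ⟨iv, hiv, j, (Finset.mem_erase.1 hj2).2, hjb', he⟩
                  refine ⟨hxG, ?_⟩
                  intro hjvβ hxe
                  rw [he] at hxe
                  exact (Finset.mem_erase.1 hj2).1 (Nat.add_left_cancel hxe)
              · rw [hvB hEq2] at hjτ'
                right
                have hxG : x ∈ G := by
                  rw [hG, mem_globF]
                  exact ⟨iv, hiv, j, (Finset.mem_erase.1 hjτ').2, hjb', he⟩
                refine ⟨hxG, ?_⟩
                intro hjvβ hxe
                rw [he] at hxe
                exact (Finset.mem_erase.1 hjτ').1 (Nat.add_left_cancel hxe)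
            · by_cases hti₀ : t = i₀
              · have hEq2 : i₀ ≠ iv := fun h => htiv (by omega)
                rw [hti₀] at hjτ' hjb' he
                rw [hvC hEq2] at hjτ'
                rcases Finset.mem_insert.1 hjτ' with rfl | hj2
                · left; rw [he, hy]
                · right
                  have hxG : x ∈ G := by
                    rw [hG, mem_globF]
                    exact ⟨i₀, hi₀, j, hj2, hjb', he⟩
                  refine ⟨hxG, ?_⟩
                  intro hjvβ hxe
                  rw [he] at hxe
                  have hww := glob_window (b := b) hjb' (by rw [hbiv]; omega) hxe
                  exact hEq2 hww.1
              · rw [hvD t htiv hti₀] at hjτ'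
                right
                have hxG : x ∈ G := by
                  rw [hG, mem_globF]
                  exact ⟨t, ht, j, hjτ', hjb', he⟩
                refine ⟨hxG, ?_⟩
                intro hjvβ hxe
                rw [he] at hxe
                have hww := glob_window (b := b) hjb' (by rw [hbiv]; omega) hxe
                exact htiv hww.1
          · intro hx
            rcases hx with rfl | ⟨hxG, hxcond⟩
            · exact hyG'
            · rw [hG, mem_globF] at hxG
              obtain ⟨t, ht, j, hjτ, hjb, he⟩ := hxG
              rw [hG', mem_globF]
              have hg1 : j < b' t := by rw [hbb t]; exact hjb
              have hg2 : x = offF b' t + j := by rw [hoffe t]; exact he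
              refine ⟨t, ht, j, ?_, hg1, hg2⟩
              by_cases htiv : t = iv
              · have hjne : j ≠ jv := by
                  by_cases hjvβ : jv < β
                  · intro hjj
                    exact hxcond hjvβ (by rw [he, htiv, hjj])
                  · intro hjj
                    rw [htiv, hbiv] at hjb
                    omega
                rw [htiv]
                by_cases hEq2 : i₀ = iv
                · rw [hvA hEq2]
                  exact Finset.mem_insert_of_mem (Finset.mem_erase.2 ⟨hjne, htiv ▸ hjτ⟩)
                · rw [hvB hEq2]
                  exact Finset.mem_erase.2 ⟨hjne, htiv ▸ hjτ⟩
              · by_cases hti₀ : t = i₀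
                · have hEq2 : i₀ ≠ iv := fun h => htiv (by omega)
                  rw [hti₀, hvC hEq2]
                  exact Finset.mem_insert_of_mem (hti₀ ▸ hjτ)
                · rw [hvD t htiv hti₀]
                  exact hjτ
        by_cases hjvβ : jv < β
        · have hxgG : offF b iv + jv ∈ G := by
            rw [hG, mem_globF]
            exact ⟨iv, hiv, jv, hjv, by rw [hbiv]; omega, rfl⟩
          have hyx : y < offF b iv + jv := by
            by_cases hEq2 : i₀ = iv
            · have hj0jv : j₀ < jv := by
                rcases hor with h | h
                · omega
                · exact h.2
              rw [hy, hEq2]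
              omega
            · have hle : offF b i₀ + b i₀ ≤ offF b iv := by
                rw [← offF_succ]
                exact offF_mono b (by omega)
              rw [hy]
              omega
          have hGeq2 : G' = insert y (G.erase (offF b iv + jv)) := by
            ext x
            rw [hGeq x, Finset.mem_insert, Finset.mem_erase]
            constructor
            · rintro (rfl | ⟨h1, h2⟩)
              · exact Or.inl rfl
              · exact Or.inr ⟨h2 hjvβ, h1⟩
            · rintro (rfl | ⟨h1, h2⟩)
              · exact Or.inl rfl
              · exact Or.inr ⟨h2, fun _ => h1⟩
          intro x
          rcases Nat.eq_zero_or_pos x with rfl | hx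
          · rw [tailc_zero, tailc_zero]
            have hc1 : G'.card = G.card := by
              rw [hGeq2, Finset.card_insert_of_notMem
                (fun h => hyG (Finset.erase_subset _ _ h)), Finset.card_erase_of_mem hxgG]
              have hpos : 1 ≤ G.card := Finset.card_pos.2 ⟨_, hxgG⟩
              omega
            omega
          · rw [tailc_phiMap _ _ hx, tailc_phiMap _ _ hx, hGeq2]
            exact tgap_swap G (offF b iv + jv) y hxgG hyG hyx x
        · have hGeq2 : G' = insert y G := by
            ext x
            rw [hGeq x, Finset.mem_insert]
            constructor
            · rintro (rfl | ⟨h1, h2⟩)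
              · exact Or.inl rfl
              · exact Or.inr h1
            · rintro (rfl | h1)
              · exact Or.inl rfl
              · exact Or.inr ⟨h1, fun h => absurd h hjvβ⟩
          intro x
          rcases Nat.eq_zero_or_pos x with rfl | hx
          · rw [tailc_zero, tailc_zero]
            have hc1 : G'.card = G.card + 1 := by
              rw [hGeq2, Finset.card_insert_of_notMem hyG]
            omega
          · rw [tailc_phiMap _ _ hx, tailc_phiMap _ _ hx, hGeq2]
            exact tgap_insert0 G y hrangey x hx
  obtain ⟨hkeyA, hkeyC⟩ := hkeys
  refine ⟨?_, ?_, ?_⟩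
  · rw [hP0, hP1, hP0', hP1']
    omega
  · rw [hP1, hP1']
    exact hμB
  · rw [hP0, hP1, hP0', hP1']
    intro h
    exact hkeyC h


/-- With `τ' = bk(τ,γ)`, `μ = Φ(τ)`, `μ' = Φ(τ')`:
`deg μ'_{X₀∪X_iv} ≤ deg μ_{X₀∪X_iv}`, and there is a divisor `ν` of `μ_{X₀∪X_iv}` with
`deg ν = deg μ'_{X₀∪X_iv}` and `μ'_{X₀∪X_iv} ⪰ ν` in revlex. -/
theorem stmt16 (m d : ℕ) (n a : ℕ → ℕ)
    (hd1 : 1 ≤ d) (hd2 : d ≤ ∑ i ∈ Finset.range m, a i)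
    (ha : ∀ i, i < m → 0 < a i ∧ a i ≤ n i)
    (τ : ℕ → Finset ℕ) (hτ : IsFacetT m d n a τ)
    (iv jv i₀ j₀ : ℕ) (hiv : iv < m)
    (hswap :
      (jv ∈ tailT m a n τ iv ∧ i₀ < m ∧ (τ i₀).card < a i₀ ∧
        (∀ t, t < i₀ → (τ t).card = a t) ∧ j₀ < n i₀ ∧ j₀ ∉ τ i₀ ∧
        (∀ g, g < j₀ → g ∈ τ i₀)) ∨
      (jv ∈ upT a n τ iv ∧ i₀ = iv ∧ j₀ < n iv ∧ j₀ ∉ τ iv ∧ (∀ g, g < j₀ → g ∈ τ iv)))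
    (τ' : ℕ → Finset ℕ)
    (hτ' : τ' = fun t => (if t = i₀ then insert j₀ else id)
        (if t = iv then (τ t).erase jv else τ t)) :
    Multiset.card (PhiMapT m a n τ' 0) + Multiset.card (PhiMapT m a n τ' (iv + 1))
      ≤ Multiset.card (PhiMapT m a n τ 0) + Multiset.card (PhiMapT m a n τ (iv + 1)) ∧
    ∃ ν₀ ν₁ : Multiset ℕ, ν₀ ≤ PhiMapT m a n τ 0 ∧ ν₁ ≤ PhiMapT m a n τ (iv + 1) ∧
      Multiset.card ν₀ + Multiset.card ν₁
        = Multiset.card (PhiMapT m a n τ' 0) + Multiset.card (PhiMapT m a n τ' (iv + 1)) ∧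
      ((PhiMapT m a n τ' 0 = ν₀ ∧ PhiMapT m a n τ' (iv + 1) = ν₁) ∨
        MonRevGT2 (PhiMapT m a n τ' 0) (PhiMapT m a n τ' (iv + 1)) ν₀ ν₁) := by
  obtain ⟨hτ1, hτ2, hτ3, hτ4⟩ := hτ
  have hmain : (Multiset.card (PhiMapT m a n τ' 0) + Multiset.card (PhiMapT m a n τ' (iv + 1))
      ≤ Multiset.card (PhiMapT m a n τ 0) + Multiset.card (PhiMapT m a n τ (iv + 1))) ∧
    (∀ x, tailc (PhiMapT m a n τ' (iv + 1)) x ≤ tailc (PhiMapT m a n τ (iv + 1)) x) ∧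
    (PhiMapT m a n τ' (iv + 1) = PhiMapT m a n τ (iv + 1) →
      ∀ x, tailc (PhiMapT m a n τ' 0) x ≤ tailc (PhiMapT m a n τ 0) x) := by
    rcases hswap with ⟨hjvtail, hi₀m, hc0, hfulls, hj₀n, hj₀τ, hleast⟩ |
      ⟨hjvup, hEq, hj₀n, hj₀τ, hleast⟩
    · -- tail case
      rw [tailT, Finset.mem_filter] at hjvtail
      obtain ⟨hjvmem, i₀', hi₀'m, hc0', hfulls', hor'⟩ := hjvtail
      have hii : i₀' = i₀ := by
        rcases Nat.lt_trichotomy i₀' i₀ with h | h | h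
        · have := hfulls i₀' h; omega
        · exact h
        · have := hfulls' i₀ h; omega
      subst hii
      have hi₀iv : i₀' ≤ iv := by
        rcases hor' with h | h
        · omega
        · omega
      have hj₀least : Finset.range j₀ ⊆ τ i₀' :=
        fun g hg => hleast g (Finset.mem_range.1 hg)
      apply main_core m n a τ hτ1 hτ2 ha iv i₀' jv j₀ hiv hi₀'m hi₀iv hjvmem hj₀n hj₀τ
        hj₀least _ τ' hτ'
      right
      refine ⟨hc0, hfulls, ?_⟩
      rcases hor' with h | ⟨hEq, g, hg1, hg2, hg3⟩
      · exact Or.inl h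
      · right
        refine ⟨hEq, ?_⟩
        have : j₀ ≤ g := by
          by_contra hc
          exact hg2 (hEq ▸ hleast g (by omega))
        omega
    · -- up case
      rw [upT] at hjvup
      have hfull : (τ iv).card = a iv := by
        by_contra hc
        rw [if_neg hc] at hjvup
        exact absurd hjvup (Finset.notMem_empty jv)
      rw [if_pos hfull, Finset.mem_filter] at hjvup
      obtain ⟨hjvmem, g, hgmem, hgjv⟩ := hjvup
      have hg2 : g ∉ τ iv := (Finset.mem_sdiff.1 hgmem).2
      have hj0jv : j₀ < jv := by
        have : j₀ ≤ g := by
          by_contra hc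
          exact hg2 (hleast g (by omega))
        omega
      have hi₀m : i₀ < m := by omega
      have hj₀least : Finset.range j₀ ⊆ τ i₀ := by
        rw [hEq]
        exact fun z hz => hleast z (Finset.mem_range.1 hz)
      apply main_core m n a τ hτ1 hτ2 ha iv i₀ jv j₀ hiv hi₀m (by omega) hjvmem
        (by rw [hEq]; exact hj₀n) (by rw [hEq]; exact hj₀τ) hj₀least _ τ' hτ'
      exact Or.inl ⟨hEq, hfull, hj0jv⟩
  obtain ⟨hA, hB, hC⟩ := hmain
  exact ⟨hA, glue _ _ _ _ hA hB hC⟩
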